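/- arXiv:1812.02337 — 4 statements merged into one kernel-verified Lean document; each statement's English description precedes it below -/
import Mathlib

section
/- The map φ_r : M^{m×k} → ℝ, φ_r(Π) = min_{U ∈ S^{k×(k−r)}} ‖ΠU‖², is Hadamard directionally differentiable at every Π, with derivative φ'_{r,Π}(M) = min_{U ∈ Ψ(Π)} 2·tr((ΠU)ᵀ M U), where Ψ(Π) = argmin_{U ∈ S^{k×(k−r)}} ‖ΠU‖². That is, for any M_n → M in M^{m×k} and t_n ↓ 0, (φ_r(Π + t_n M_n) − φ_r(Π))/t_n → φ'_{r,Π}(M). -/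
open Matrix Filter Topology

noncomputable def frobNormSq {m k : ℕ} (A : Matrix (Fin m) (Fin k) ℝ) : ℝ :=
  Matrix.trace (Aᵀ * A)

noncomputable def frobNorm {m k : ℕ} (A : Matrix (Fin m) (Fin k) ℝ) : ℝ :=
  Real.sqrt (frobNormSq A)

theorem transpose_mul_self_isHermitian {m k : ℕ} (A : Matrix (Fin m) (Fin k) ℝ) :
    (Aᵀ * A).IsHermitian := by
  have h := Matrix.isHermitian_conjTranspose_mul_self A
  rwa [Matrix.conjTranspose_eq_transpose_of_trivial] at h

/-- `sv A j` is the `j+1`-th largest singular value of `A`. -/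
noncomputable def sv {m k : ℕ} (A : Matrix (Fin m) (Fin k) ℝ) : Fin k → ℝ :=
  fun j =>
    Real.sqrt ((transpose_mul_self_isHermitian A).eigenvalues
      (Tuple.sort ((transpose_mul_self_isHermitian A).eigenvalues) j.rev))

/-- `phi r A` is the sum of the squared singular values `σ_{r+1}², …, σ_k²`. -/
noncomputable def phi {m k : ℕ} (r : ℕ) (A : Matrix (Fin m) (Fin k) ℝ) : ℝ :=
  ∑ j ∈ Finset.univ.filter (fun j : Fin k => r ≤ (j : ℕ)), sv A j ^ 2

/-- The argmin set `Ψ(A)` of `U ↦ ‖A U‖²` over matrices with orthonormal columns. -/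
noncomputable def argminSet {m k : ℕ} (d : ℕ) (A : Matrix (Fin m) (Fin k) ℝ) :
    Set (Matrix (Fin k) (Fin d) ℝ) :=
  {U | Uᵀ * U = 1 ∧ ∀ V : Matrix (Fin k) (Fin d) ℝ, Vᵀ * V = 1 →
    frobNormSq (A * U) ≤ frobNormSq (A * V)}

noncomputable def phiDeriv {m k : ℕ} (r : ℕ) (A M : Matrix (Fin m) (Fin k) ℝ) : ℝ :=
  sInf {x : ℝ | ∃ U ∈ argminSet (k - r) A, x = 2 * Matrix.trace ((A * U)ᵀ * (M * U))}


namespace PhiProof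

lemma frobNormSq_eq_sum {m k : ℕ} (A : Matrix (Fin m) (Fin k) ℝ) :
    frobNormSq A = ∑ j, ∑ i, (A i j) ^ 2 := by
  simp [frobNormSq, Matrix.trace, Matrix.diag, Matrix.mul_apply, sq]

lemma frobNormSq_nonneg {m k : ℕ} (A : Matrix (Fin m) (Fin k) ℝ) : 0 ≤ frobNormSq A := by
  rw [frobNormSq_eq_sum]
  positivity

lemma continuous_frobNormSq {m k : ℕ} :
    Continuous (frobNormSq : Matrix (Fin m) (Fin k) ℝ → ℝ) := by
  simp only [funext frobNormSq_eq_sum]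
  exact continuous_finset_sum _ fun j _ => continuous_finset_sum _ fun i _ =>
    ((continuous_apply_apply i j).pow 2)

def St (k d : ℕ) : Set (Matrix (Fin k) (Fin d) ℝ) := {U | Uᵀ * U = 1}

lemma isClosed_St (k d : ℕ) : IsClosed (St k d) := by
  have h : Continuous fun U : Matrix (Fin k) (Fin d) ℝ => Uᵀ * U :=
    (continuous_id.matrix_transpose).matrix_mul continuous_id
  exact isClosed_singleton.preimage h

lemma St_subset_box {k d : ℕ} {U : Matrix (Fin k) (Fin d) ℝ} (hU : U ∈ St k d)
    (i : Fin k) (j : Fin d) : U i j ∈ Set.Icc (-1 : ℝ) 1 := by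
  have h1 : (Uᵀ * U) j j = 1 := by rw [hU]; simp
  have h2 : ∑ i', (U i' j) ^ 2 = 1 := by
    simpa [Matrix.mul_apply, sq] using h1
  have hle : (U i j) ^ 2 ≤ 1 := by
    rw [← h2]
    exact Finset.single_le_sum (f := fun i' => (U i' j)^2) (fun _ _ => sq_nonneg _)
      (Finset.mem_univ i)
  constructor <;> nlinarith [sq_nonneg (U i j)]

lemma isCompact_St (k d : ℕ) : IsCompact (St k d) := by
  have hbox : IsCompact {U : Matrix (Fin k) (Fin d) ℝ |
      ∀ i j, U i j ∈ Set.Icc (-1 : ℝ) 1} := by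
    have : {U : Matrix (Fin k) (Fin d) ℝ | ∀ i j, U i j ∈ Set.Icc (-1 : ℝ) 1} =
        Set.univ.pi fun _ : Fin k => Set.univ.pi fun _ : Fin d => Set.Icc (-1 : ℝ) 1 := by
      ext U
      constructor
      · intro h i _ j _
        exact h i j
      · intro h i j
        exact h i (Set.mem_univ i) j (Set.mem_univ j)
    rw [this]
    exact isCompact_univ_pi fun _ => isCompact_univ_pi fun _ => isCompact_Icc
  exact hbox.of_isClosed_subset (isClosed_St k d) fun U hU i j => St_subset_box hU i j

lemma St_nonempty {k d : ℕ} (hd : d ≤ k) : (St k d).Nonempty := by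
  refine ⟨Matrix.of fun i j => if i = Fin.castLE hd j then 1 else 0, ?_⟩
  ext j j'
  simp only [Matrix.mul_apply, Matrix.transpose_apply, Matrix.of_apply]
  rcases eq_or_ne j j' with rfl | hne
  · simp [Matrix.one_apply]
  · have hinj : Fin.castLE hd j ≠ Fin.castLE hd j' := fun h => hne (Fin.castLE_injective hd h)
    rw [Matrix.one_apply_ne hne]
    rw [Finset.sum_eq_zero]
    intro i _
    rcases eq_or_ne i (Fin.castLE hd j) with rfl | h
    · simp [hinj]
    · simp [h]

end PhiProof

namespace PhiProof2
open PhiProof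

lemma filter_lt_eq_image {k d : ℕ} (hdk : d ≤ k) :
    Finset.univ.filter (fun i : Fin k => (i : ℕ) < d)
      = Finset.image (Fin.castLE hdk) Finset.univ := by
  ext i
  simp only [Finset.mem_filter, Finset.mem_univ, true_and, Finset.mem_image]
  constructor
  · intro h
    exact ⟨⟨(i : ℕ), h⟩, by ext; simp⟩
  · rintro ⟨j, rfl⟩
    exact j.isLt

lemma sum_filter_lt_eq {k d : ℕ} (hdk : d ≤ k) (f : Fin k → ℝ) :
    ∑ i ∈ Finset.univ.filter (fun i : Fin k => (i : ℕ) < d), f i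
      = ∑ j : Fin d, f (Fin.castLE hdk j) := by
  rw [filter_lt_eq_image hdk, Finset.sum_image]
  intro a _ b _ h
  exact Fin.castLE_injective hdk h

lemma key_ineq {k d : ℕ} (hd0 : 0 < d) (hdk : d ≤ k) (μ c : Fin k → ℝ)
    (hmono : Monotone μ) (hc0 : ∀ i, 0 ≤ c i) (hc1 : ∀ i, c i ≤ 1)
    (hsum : ∑ i, c i = (d : ℝ)) :
    ∑ i ∈ Finset.univ.filter (fun i : Fin k => (i : ℕ) < d), μ i ≤ ∑ i, μ i * c i := by
  set θ : ℝ := μ ⟨d - 1, lt_of_lt_of_le (Nat.pred_lt hd0.ne') hdk⟩ with hθ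
  have hsplit : ∀ g : Fin k → ℝ, ∑ i, g i
      = ∑ i ∈ Finset.univ.filter (fun i : Fin k => (i : ℕ) < d), g i
        + ∑ i ∈ Finset.univ.filter (fun i : Fin k => ¬ (i : ℕ) < d), g i := by
    intro g
    exact (Finset.sum_filter_add_sum_filter_not _ _ _).symm
  have hcard : ∑ _i ∈ Finset.univ.filter (fun i : Fin k => (i : ℕ) < d), (1 : ℝ) = d := by
    rw [sum_filter_lt_eq hdk]
    simp
  have h1 : ∀ i ∈ Finset.univ.filter (fun i : Fin k => (i : ℕ) < d),
      μ i + θ * (c i - 1) ≤ μ i * c i := by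
    intro i hi
    have hid : (i : ℕ) < d := (Finset.mem_filter.mp hi).2
    have hle : μ i ≤ θ := hmono (by
      show (i : ℕ) ≤ d - 1
      omega)
    nlinarith [hc1 i]
  have h2 : ∀ i ∈ Finset.univ.filter (fun i : Fin k => ¬ (i : ℕ) < d),
      θ * c i ≤ μ i * c i := by
    intro i hi
    have hid : ¬ (i : ℕ) < d := (Finset.mem_filter.mp hi).2
    have hle : θ ≤ μ i := hmono (by
      show (d - 1 : ℕ) ≤ (i : ℕ)
      omega)
    nlinarith [hc0 i]
  have key : ∑ i ∈ Finset.univ.filter (fun i : Fin k => (i : ℕ) < d), (μ i + θ * (c i - 1))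
      + ∑ i ∈ Finset.univ.filter (fun i : Fin k => ¬ (i : ℕ) < d), θ * c i
      ≤ ∑ i, μ i * c i := by
    rw [hsplit (fun i => μ i * c i)]
    exact add_le_add (Finset.sum_le_sum h1) (Finset.sum_le_sum h2)
  have hrw : ∑ i ∈ Finset.univ.filter (fun i : Fin k => (i : ℕ) < d), (μ i + θ * (c i - 1))
      + ∑ i ∈ Finset.univ.filter (fun i : Fin k => ¬ (i : ℕ) < d), θ * c i
      = ∑ i ∈ Finset.univ.filter (fun i : Fin k => (i : ℕ) < d), μ i
        + θ * ((∑ i, c i) - d) := by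
    rw [hsplit c]
    simp only [Finset.sum_add_distrib, Finset.mul_sum, mul_sub, mul_one]
    rw [Finset.sum_sub_distrib]
    have : ∑ i ∈ Finset.univ.filter (fun i : Fin k => (i : ℕ) < d), θ = θ * d := by
      rw [← hcard, Finset.mul_sum]
      simp
    rw [this]
    simp only [mul_add, Finset.mul_sum]
    ring
  rw [hrw, hsum] at key
  simpa using key

end PhiProof2

namespace PhiProof3
open PhiProof PhiProof2

lemma frobNormSq_mul {m k d : ℕ} (B : Matrix (Fin m) (Fin k) ℝ)
    (U : Matrix (Fin k) (Fin d) ℝ) :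
    frobNormSq (B * U) = Matrix.trace (Uᵀ * (Bᵀ * B) * U) := by
  simp only [frobNormSq, Matrix.transpose_mul, Matrix.mul_assoc]

lemma trace_quadratic_diagonal {k d : ℕ} (lam : Fin k → ℝ) (W : Matrix (Fin k) (Fin d) ℝ) :
    Matrix.trace (Wᵀ * Matrix.diagonal lam * W) = ∑ a, lam a * (∑ j, (W a j) ^ 2) := by
  simp only [Matrix.trace, Matrix.diag, Matrix.mul_apply, Matrix.transpose_apply,
    Matrix.diagonal_apply]
  rw [Finset.sum_comm]
  congr 1
  ext a
  rw [Finset.mul_sum]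
  congr 1
  ext j
  rw [Finset.sum_eq_single a]
  · simp [sq]; ring
  · intro b _ hb; simp [hb]
  · simp

lemma proj_diag_le_one {k d : ℕ} {W : Matrix (Fin k) (Fin d) ℝ} (hW : Wᵀ * W = 1)
    (a : Fin k) : ∑ j, (W a j) ^ 2 ≤ 1 := by
  set P := W * Wᵀ with hP
  have hPsymm : Pᵀ = P := by simp [hP, Matrix.transpose_mul]
  have hP2 : P * P = P := by
    calc P * P = W * (Wᵀ * W) * Wᵀ := by simp only [hP, Matrix.mul_assoc]
    _ = P := by rw [hW]; simp [hP]
  have hPaa : P a a = ∑ j, (W a j) ^ 2 := by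
    simp [hP, Matrix.mul_apply, sq]
  have hsq : P a a = ∑ b, (P a b) ^ 2 := by
    conv_lhs => rw [← hP2]
    simp only [Matrix.mul_apply]
    congr 1
    ext b
    have : P b a = P a b := by exact congrFun (congrFun hPsymm a) b
    rw [this, sq]
  have h1 : (P a a) ^ 2 ≤ P a a := by
    calc (P a a) ^ 2 ≤ ∑ b, (P a b) ^ 2 :=
          Finset.single_le_sum (f := fun b => (P a b) ^ 2) (fun _ _ => sq_nonneg _)
            (Finset.mem_univ a)
    _ = P a a := hsq.symm
  have h0 : 0 ≤ P a a := by rw [hPaa]; positivity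
  nlinarith [hPaa]

lemma proj_diag_sum {k d : ℕ} {W : Matrix (Fin k) (Fin d) ℝ} (hW : Wᵀ * W = 1) :
    ∑ a, (∑ j, (W a j) ^ 2) = (d : ℝ) := by
  have : ∑ a, (∑ j, (W a j) ^ 2) = Matrix.trace (Wᵀ * W) := by
    simp only [Matrix.trace, Matrix.diag, Matrix.mul_apply, Matrix.transpose_apply, sq]
    rw [Finset.sum_comm]
  rw [this, hW, Matrix.trace_one]
  simp

lemma colSelect_mem_St {k d : ℕ} (e : Fin d → Fin k) (he : Function.Injective e) :
    (Matrix.of fun i j => if i = e j then (1:ℝ) else 0) ∈ St k d := by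
  show _ = _
  ext j j'
  simp only [Matrix.mul_apply, Matrix.transpose_apply, Matrix.of_apply]
  rcases eq_or_ne j j' with rfl | hne
  · simp [Matrix.one_apply]
  · have hinj : e j ≠ e j' := fun h => hne (he h)
    rw [Matrix.one_apply_ne hne, Finset.sum_eq_zero]
    intro i _
    rcases eq_or_ne i (e j) with rfl | h
    · simp [hinj]
    · simp [h]

lemma colSelect_quadratic {k d : ℕ} (lam : Fin k → ℝ) (e : Fin d → Fin k) :
    Matrix.trace ((Matrix.of fun i j => if i = e j then (1:ℝ) else 0)ᵀ *
      Matrix.diagonal lam * (Matrix.of fun i j => if i = e j then (1:ℝ) else 0))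
      = ∑ j, lam (e j) := by
  rw [trace_quadratic_diagonal]
  have : ∀ a, lam a * (∑ j, ((Matrix.of fun i j => if i = e j then (1:ℝ) else 0) a j) ^ 2)
      = ∑ j, if a = e j then lam a else 0 := by
    intro a
    rw [Finset.mul_sum]
    congr 1
    ext j
    simp only [Matrix.of_apply]
    split <;> simp
  simp only [this]
  rw [Finset.sum_comm]
  congr 1
  ext j
  rw [Finset.sum_eq_single (e j)]
  · simp
  · intro b _ hb; simp [hb]
  · simp

end PhiProof3

theorem transpose_mul_self_isHermitian' {m k : ℕ} (A : Matrix (Fin m) (Fin k) ℝ) :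
    (Aᵀ * A).IsHermitian := transpose_mul_self_isHermitian A

namespace PhiProof4
open PhiProof PhiProof2 PhiProof3

variable {m k d : ℕ} (B : Matrix (Fin m) (Fin k) ℝ)

local notation "hS" B => transpose_mul_self_isHermitian' B

noncomputable def lam (B : Matrix (Fin m) (Fin k) ℝ) : Fin k → ℝ :=
  (transpose_mul_self_isHermitian' B).eigenvalues

noncomputable def perm (B : Matrix (Fin m) (Fin k) ℝ) : Equiv.Perm (Fin k) :=
  Tuple.sort (lam B)

noncomputable def Q (B : Matrix (Fin m) (Fin k) ℝ) : Matrix (Fin k) (Fin k) ℝ :=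
  (transpose_mul_self_isHermitian' B).eigenvectorUnitary

lemma hQ1 : (Q B)ᵀ * Q B = 1 := by
  have := (transpose_mul_self_isHermitian' B).eigenvectorUnitary.2
  rw [Matrix.mem_unitaryGroup_iff'] at this
  rw [← Matrix.conjTranspose_eq_transpose_of_trivial]
  exact this

lemma hQ2 : Q B * (Q B)ᵀ = 1 := by
  have := (transpose_mul_self_isHermitian' B).eigenvectorUnitary.2
  rw [Matrix.mem_unitaryGroup_iff] at this
  rw [← Matrix.conjTranspose_eq_transpose_of_trivial]
  exact this

lemma spectral : Bᵀ * B = Q B * Matrix.diagonal (lam B) * (Q B)ᵀ := by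
  have h := (transpose_mul_self_isHermitian' B).spectral_theorem
  rw [h, Unitary.conjStarAlgAut_apply]
  simp [Q, lam, Matrix.star_eq_conjTranspose, Function.comp_def]

lemma lam_nonneg (i : Fin k) : 0 ≤ lam B i := by
  have h := Matrix.posSemidef_conjTranspose_mul_self B
  rw [Matrix.conjTranspose_eq_transpose_of_trivial] at h
  exact h.eigenvalues_nonneg i

lemma kyfan_lower (hd0 : 0 < d) (hdk : d ≤ k) {U : Matrix (Fin k) (Fin d) ℝ}
    (hU : U ∈ St k d) :
    ∑ j : Fin d, lam B (perm B (Fin.castLE hdk j)) ≤ frobNormSq (B * U) := by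
  rw [frobNormSq_mul, spectral B]
  set W : Matrix (Fin k) (Fin d) ℝ := (Q B)ᵀ * U with hW
  have hWtr : Uᵀ * (Q B * Matrix.diagonal (lam B) * (Q B)ᵀ) * U
      = Wᵀ * Matrix.diagonal (lam B) * W := by
    simp only [hW, Matrix.transpose_mul, Matrix.transpose_transpose, Matrix.mul_assoc]
  rw [hWtr, trace_quadratic_diagonal]
  have hWst : Wᵀ * W = 1 := by
    have : Wᵀ * W = Uᵀ * (Q B * (Q B)ᵀ) * U := by
      simp only [hW, Matrix.transpose_mul, Matrix.transpose_transpose, Matrix.mul_assoc]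
    rw [this, hQ2, Matrix.mul_one, hU]
  set c : Fin k → ℝ := fun a => ∑ j, (W a j) ^ 2 with hc
  have key := key_ineq hd0 hdk (fun i => lam B (perm B i)) (fun i => c (perm B i))
    (Tuple.monotone_sort (lam B))
    (fun i => by positivity)
    (fun i => proj_diag_le_one hWst _)
    (by rw [Equiv.sum_comp (perm B) c]; exact proj_diag_sum hWst)
  rw [sum_filter_lt_eq hdk] at key
  refine key.trans (le_of_eq ?_)
  exact Equiv.sum_comp (perm B) (fun a => lam B a * c a)

lemma kyfan_attained (hdk : d ≤ k) :
    ∃ U ∈ St k d, frobNormSq (B * U)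
      = ∑ j : Fin d, lam B (perm B (Fin.castLE hdk j)) := by
  set e : Fin d → Fin k := fun j => perm B (Fin.castLE hdk j) with he
  have heinj : Function.Injective e := fun a b h =>
    Fin.castLE_injective hdk ((perm B).injective h)
  set E : Matrix (Fin k) (Fin d) ℝ := Matrix.of fun i j => if i = e j then 1 else 0 with hE
  have hEst : Eᵀ * E = 1 := colSelect_mem_St e heinj
  refine ⟨Q B * E, ?_, ?_⟩
  · show _ = _
    calc (Q B * E)ᵀ * (Q B * E) = Eᵀ * ((Q B)ᵀ * Q B) * E := by
          simp only [Matrix.transpose_mul, Matrix.mul_assoc]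
    _ = 1 := by rw [hQ1, Matrix.mul_one, hEst]
  · rw [frobNormSq_mul, spectral B]
    have : (Q B * E)ᵀ * (Q B * Matrix.diagonal (lam B) * (Q B)ᵀ) * (Q B * E)
        = Eᵀ * (((Q B)ᵀ * Q B) * Matrix.diagonal (lam B) * ((Q B)ᵀ * Q B)) * E := by
      simp only [Matrix.transpose_mul, Matrix.mul_assoc]
    rw [this, hQ1, Matrix.one_mul, Matrix.mul_one, colSelect_quadratic]

end PhiProof4

namespace PhiProof5
open PhiProof PhiProof2 PhiProof3 PhiProof4

lemma phi_eq {m k : ℕ} (r : ℕ) (hr : r < k) (B : Matrix (Fin m) (Fin k) ℝ) :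
    phi r B = ∑ j : Fin (k - r), lam B (perm B (Fin.castLE (Nat.sub_le k r) j)) := by
  have hdk : k - r ≤ k := Nat.sub_le k r
  have hsv : ∀ j : Fin k, sv B j ^ 2 = lam B (perm B j.rev) := by
    intro j
    exact Real.sq_sqrt (lam_nonneg B _)
  rw [phi]
  simp only [hsv]
  have himg : Finset.univ.filter (fun j : Fin k => r ≤ (j : ℕ))
      = Finset.image (fun j' : Fin (k - r) => (Fin.castLE hdk j').rev) Finset.univ := by
    ext j
    simp only [Finset.mem_filter, Finset.mem_univ, true_and, Finset.mem_image]
    have hj := j.isLt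
    constructor
    · intro h
      refine ⟨⟨k - 1 - (j : ℕ), by omega⟩, ?_⟩
      ext
      rw [Fin.val_rev]
      simp only [Fin.castLE]
      omega
    · rintro ⟨j', rfl⟩
      have hj' := j'.isLt
      rw [Fin.val_rev]
      simp only [Fin.castLE]
      omega
  rw [himg, Finset.sum_image (by
    intro a _ b _ h
    exact Fin.castLE_injective hdk (Fin.rev_injective h))]
  congr 1
  ext j'
  rw [Fin.rev_rev]

lemma phi_le {m k : ℕ} (r : ℕ) (hr : r < k) (B : Matrix (Fin m) (Fin k) ℝ)
    {U : Matrix (Fin k) (Fin (k - r)) ℝ} (hU : Uᵀ * U = 1) :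
    phi r B ≤ frobNormSq (B * U) := by
  rw [phi_eq r hr B]
  exact kyfan_lower B (by omega) (Nat.sub_le k r) hU

lemma phi_attained {m k : ℕ} (r : ℕ) (hr : r < k) (B : Matrix (Fin m) (Fin k) ℝ) :
    ∃ U ∈ St k (k - r), frobNormSq (B * U) = phi r B := by
  obtain ⟨U, hU, hval⟩ := kyfan_attained B (Nat.sub_le k r)
  exact ⟨U, hU, by rw [hval, phi_eq r hr B]⟩

lemma argminSet_eq {m k : ℕ} (r : ℕ) (hr : r < k) (B : Matrix (Fin m) (Fin k) ℝ) :
    argminSet (k - r) B = {U | U ∈ St k (k - r) ∧ frobNormSq (B * U) = phi r B} := by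
  ext U
  constructor
  · rintro ⟨hU, hmin⟩
    refine ⟨hU, le_antisymm ?_ (phi_le r hr B hU)⟩
    obtain ⟨V, hV, hVval⟩ := phi_attained r hr B
    rw [← hVval]
    exact hmin V hV
  · rintro ⟨hU, hval⟩
    refine ⟨hU, fun V hV => ?_⟩
    rw [hval]
    exact phi_le r hr B hV

lemma argminSet_nonempty {m k : ℕ} (r : ℕ) (hr : r < k) (B : Matrix (Fin m) (Fin k) ℝ) :
    (argminSet (k - r) B).Nonempty := by
  obtain ⟨U, hU, hval⟩ := phi_attained r hr B
  exact ⟨U, (argminSet_eq r hr B) ▸ Set.mem_setOf_eq ▸ ⟨hU, hval⟩⟩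

end PhiProof5


namespace TendstoHelpers
open PhiProof Filter Topology

lemma tendsto_matrix_mul {α : Type} {l : Filter α} {a b c : ℕ}
    {X : α → Matrix (Fin a) (Fin b) ℝ} {X0 : Matrix (Fin a) (Fin b) ℝ}
    {Y : α → Matrix (Fin b) (Fin c) ℝ} {Y0 : Matrix (Fin b) (Fin c) ℝ}
    (hX : Tendsto X l (nhds X0)) (hY : Tendsto Y l (nhds Y0)) :
    Tendsto (fun n => X n * Y n) l (nhds (X0 * Y0)) :=
  (((continuous_fst.matrix_mul continuous_snd).tendsto (X0, Y0)).comp (hX.prodMk_nhds hY) :)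

lemma tendsto_matrix_transpose {α : Type} {l : Filter α} {a b : ℕ}
    {X : α → Matrix (Fin a) (Fin b) ℝ} {X0 : Matrix (Fin a) (Fin b) ℝ}
    (hX : Tendsto X l (nhds X0)) :
    Tendsto (fun n => (X n)ᵀ) l (nhds X0ᵀ) :=
  ((continuous_id.matrix_transpose.tendsto X0).comp hX :)

lemma tendsto_matrix_trace {α : Type} {l : Filter α} {a : ℕ}
    {X : α → Matrix (Fin a) (Fin a) ℝ} {X0 : Matrix (Fin a) (Fin a) ℝ}
    (hX : Tendsto X l (nhds X0)) :
    Tendsto (fun n => Matrix.trace (X n)) l (nhds (Matrix.trace X0)) :=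
  ((continuous_id.matrix_trace.tendsto X0).comp hX :)

lemma tendsto_frobNormSq {α : Type} {l : Filter α} {a b : ℕ}
    {X : α → Matrix (Fin a) (Fin b) ℝ} {X0 : Matrix (Fin a) (Fin b) ℝ}
    (hX : Tendsto X l (nhds X0)) :
    Tendsto (fun n => frobNormSq (X n)) l (nhds (frobNormSq X0)) :=
  ((continuous_frobNormSq.tendsto X0).comp hX :)

end TendstoHelpers

namespace PhiProof6
open PhiProof PhiProof2 PhiProof3 PhiProof4 PhiProof5 TendstoHelpers Filter Topology

lemma argmin_val {m k : ℕ} (r : ℕ) (hr : r < k) (B : Matrix (Fin m) (Fin k) ℝ)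
    {U : Matrix (Fin k) (Fin (k - r)) ℝ} (hU : U ∈ argminSet (k - r) B) :
    frobNormSq (B * U) = phi r B := by
  rw [argminSet_eq r hr B] at hU
  exact hU.2

lemma expand {m k d : ℕ} (s : ℝ) (A N : Matrix (Fin m) (Fin k) ℝ)
    (U : Matrix (Fin k) (Fin d) ℝ) :
    frobNormSq ((A + s • N) * U) = frobNormSq (A * U)
      + s * (2 * Matrix.trace ((A * U)ᵀ * (N * U))) + s ^ 2 * frobNormSq (N * U) := by
  have hsw : Matrix.trace ((N * U)ᵀ * (A * U)) = Matrix.trace ((A * U)ᵀ * (N * U)) := by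
    rw [← Matrix.trace_transpose, Matrix.transpose_mul, Matrix.transpose_transpose]
  simp only [frobNormSq, Matrix.add_mul, Matrix.smul_mul, Matrix.transpose_add,
    Matrix.transpose_smul, Matrix.mul_add, Matrix.mul_smul, Matrix.trace_add,
    Matrix.trace_smul, smul_smul, smul_eq_mul]
  rw [hsw]
  ring

set_option maxHeartbeats 1000000 in
theorem main {m k : ℕ} (hk : k ≤ m) (r : ℕ) (hr : r < k)
    (A M : Matrix (Fin m) (Fin k) ℝ) (Ms : ℕ → Matrix (Fin m) (Fin k) ℝ) (t : ℕ → ℝ)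
    (htpos : ∀ n, 0 < t n) (ht0 : Tendsto t atTop (nhds 0))
    (hMs : Tendsto Ms atTop (nhds M)) :
    Tendsto (fun n => (phi r (A + t n • Ms n) - phi r A) / t n) atTop
      (nhds (phiDeriv r A M)) := by
  have hdk : k - r ≤ k := Nat.sub_le k r
  set Bn : ℕ → Matrix (Fin m) (Fin k) ℝ := fun n => A + t n • Ms n with hBn
  have hBnlim : Tendsto Bn atTop (nhds A) := by
    have h0 : Tendsto (fun n => t n • Ms n) atTop (nhds (0 : Matrix (Fin m) (Fin k) ℝ)) := by
      simpa using ht0.smul hMs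
    simpa using tendsto_const_nhds.add h0
  have contA : Continuous fun U : Matrix (Fin k) (Fin (k - r)) ℝ => frobNormSq (A * U) :=
    continuous_frobNormSq.comp (continuous_const.matrix_mul continuous_id)
  have conthM : Continuous fun U : Matrix (Fin k) (Fin (k - r)) ℝ =>
      2 * Matrix.trace ((A * U)ᵀ * (M * U)) :=
    continuous_const.mul
      ((((continuous_const.matrix_mul continuous_id).matrix_transpose).matrix_mul
        (continuous_const.matrix_mul continuous_id)).matrix_trace)
  -- compactness of the argmin set of A
  have hargclosed : IsClosed (argminSet (k - r) A) := by
    rw [argminSet_eq r hr A]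
    have : {U | U ∈ St k (k - r) ∧ frobNormSq (A * U) = phi r A}
        = St k (k - r) ∩ (fun U => frobNormSq (A * U)) ⁻¹' {phi r A} := rfl
    rw [this]
    exact (isClosed_St k (k - r)).inter (isClosed_singleton.preimage contA)
  have hargsub : argminSet (k - r) A ⊆ St k (k - r) := fun U hU => hU.1
  have hargcompact : IsCompact (argminSet (k - r) A) :=
    (isCompact_St k (k - r)).of_isClosed_subset hargclosed hargsub
  obtain ⟨Ustar, hUstar, hUmin⟩ :=
    hargcompact.exists_isMinOn (argminSet_nonempty r hr A) conthM.continuousOn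
  have hLset : IsLeast
      {x : ℝ | ∃ U ∈ argminSet (k - r) A, x = 2 * Matrix.trace ((A * U)ᵀ * (M * U))}
      (2 * Matrix.trace ((A * Ustar)ᵀ * (M * Ustar))) := by
    constructor
    · exact ⟨Ustar, hUstar, rfl⟩
    · rintro x ⟨U, hU, rfl⟩
      exact hUmin hU
  have hL : phiDeriv r A M = 2 * Matrix.trace ((A * Ustar)ᵀ * (M * Ustar)) := hLset.csInf_eq
  have hUstarSt : Ustar ∈ St k (k - r) := hUstar.1
  have hUstarval : frobNormSq (A * Ustar) = phi r A := argmin_val r hr A hUstar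
  -- minimizers for Bn
  choose V hV using fun n => argminSet_nonempty r hr (Bn n)
  have hVSt : ∀ n, V n ∈ St k (k - r) := fun n => (hV n).1
  have hVval : ∀ n, frobNormSq (Bn n * V n) = phi r (Bn n) := fun n => argmin_val r hr _ (hV n)
  -- upper sequence
  have hulim : Tendsto (fun n => 2 * Matrix.trace ((A * Ustar)ᵀ * (Ms n * Ustar))
      + t n * frobNormSq (Ms n * Ustar)) atTop (nhds (phiDeriv r A M)) := by
    rw [hL]
    have hMU : Tendsto (fun n => Ms n * Ustar) atTop (nhds (M * Ustar)) :=
      tendsto_matrix_mul hMs tendsto_const_nhds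
    have h1 : Tendsto (fun n => 2 * Matrix.trace ((A * Ustar)ᵀ * (Ms n * Ustar))) atTop
        (nhds (2 * Matrix.trace ((A * Ustar)ᵀ * (M * Ustar)))) :=
      (tendsto_matrix_trace (tendsto_matrix_mul tendsto_const_nhds hMU)).const_mul 2
    have h2 : Tendsto (fun n => t n * frobNormSq (Ms n * Ustar)) atTop (nhds 0) := by
      simpa using ht0.mul (tendsto_frobNormSq hMU)
    simpa using h1.add h2
  have hqu : ∀ n, (phi r (Bn n) - phi r A) / t n
      ≤ 2 * Matrix.trace ((A * Ustar)ᵀ * (Ms n * Ustar)) + t n * frobNormSq (Ms n * Ustar) := by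
    intro n
    rw [div_le_iff₀ (htpos n)]
    have h1 : phi r (Bn n) ≤ frobNormSq (Bn n * Ustar) := phi_le r hr (Bn n) hUstarSt
    have h3 : frobNormSq (Bn n * Ustar) = frobNormSq (A * Ustar)
        + t n * (2 * Matrix.trace ((A * Ustar)ᵀ * (Ms n * Ustar)))
        + t n ^ 2 * frobNormSq (Ms n * Ustar) := expand (t n) A (Ms n) Ustar
    rw [h3, hUstarval] at h1
    nlinarith [h1]
  -- lower bound sequence
  have hqw : ∀ n, 2 * Matrix.trace ((A * V n)ᵀ * (Ms n * V n))
      ≤ (phi r (Bn n) - phi r A) / t n := by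
    intro n
    rw [le_div_iff₀ (htpos n)]
    have h1 : phi r A ≤ frobNormSq (A * V n) := phi_le r hr A (hVSt n)
    have h2 := hVval n
    have h3 : frobNormSq (Bn n * V n) = frobNormSq (A * V n)
        + t n * (2 * Matrix.trace ((A * V n)ᵀ * (Ms n * V n)))
        + t n ^ 2 * frobNormSq (Ms n * V n) := expand (t n) A (Ms n) (V n)
    have h4 : 0 ≤ frobNormSq (Ms n * V n) := frobNormSq_nonneg _
    nlinarith [htpos n, sq_nonneg (t n)]
  -- lower eventual bound
  have hlow : ∀ x < phiDeriv r A M,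
      ∀ᶠ n in atTop, x < (phi r (Bn n) - phi r A) / t n := by
    intro x hx
    by_contra hcon
    rw [Filter.not_eventually] at hcon
    obtain ⟨φ, hφmono, hφ⟩ := Filter.extraction_of_frequently_atTop hcon
    haveI : FirstCountableTopology (Matrix (Fin k) (Fin (k - r)) ℝ) :=
      inferInstanceAs (FirstCountableTopology (Fin k → Fin (k - r) → ℝ))
    obtain ⟨Vinf, hVinfSt, ψ, hψmono, hψlim⟩ :=
      (isCompact_St k (k - r)).tendsto_subseq (x := fun j => V (φ j)) (fun j => hVSt (φ j))
    set ρ : ℕ → ℕ := φ ∘ ψ with hρ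
    have hρmono : StrictMono ρ := hφmono.comp hψmono
    have hρtop : Tendsto ρ atTop atTop := hρmono.tendsto_atTop
    have hVlim : Tendsto (fun j => V (ρ j)) atTop (nhds Vinf) := hψlim
    have hBlim' : Tendsto (fun j => Bn (ρ j)) atTop (nhds A) := hBnlim.comp hρtop
    have hMslim' : Tendsto (fun j => Ms (ρ j)) atTop (nhds M) := hMs.comp hρtop
    have hlim1 : Tendsto (fun j => frobNormSq (Bn (ρ j) * V (ρ j))) atTop
        (nhds (frobNormSq (A * Vinf))) :=
      tendsto_frobNormSq (tendsto_matrix_mul hBlim' hVlim)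
    have hlim2 : Tendsto (fun j => frobNormSq (Bn (ρ j) * Ustar)) atTop
        (nhds (frobNormSq (A * Ustar))) :=
      tendsto_frobNormSq (tendsto_matrix_mul hBlim' tendsto_const_nhds)
    have hle' : ∀ j, frobNormSq (Bn (ρ j) * V (ρ j)) ≤ frobNormSq (Bn (ρ j) * Ustar) := by
      intro j
      rw [hVval (ρ j)]
      exact phi_le r hr _ hUstarSt
    have hVinfle : frobNormSq (A * Vinf) ≤ phi r A := by
      have := le_of_tendsto_of_tendsto' hlim1 hlim2 hle'
      rwa [hUstarval] at this
    have hVinfmem : Vinf ∈ argminSet (k - r) A := by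
      rw [argminSet_eq r hr A]
      exact ⟨hVinfSt, le_antisymm hVinfle (phi_le r hr A hVinfSt)⟩
    have hgeL : phiDeriv r A M ≤ 2 * Matrix.trace ((A * Vinf)ᵀ * (M * Vinf)) :=
      hL ▸ hLset.2 ⟨Vinf, hVinfmem, rfl⟩
    have hwlim : Tendsto (fun j => 2 * Matrix.trace ((A * V (ρ j))ᵀ * (Ms (ρ j) * V (ρ j))))
        atTop (nhds (2 * Matrix.trace ((A * Vinf)ᵀ * (M * Vinf)))) :=
      (tendsto_matrix_trace (tendsto_matrix_mul
        (tendsto_matrix_transpose (tendsto_matrix_mul tendsto_const_nhds hVlim))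
        (tendsto_matrix_mul hMslim' hVlim))).const_mul 2
    have hwle : ∀ j, 2 * Matrix.trace ((A * V (ρ j))ᵀ * (Ms (ρ j) * V (ρ j))) ≤ x := fun j =>
      le_trans (hqw (ρ j)) (not_lt.mp (hφ (ψ j)))
    have hfin := le_of_tendsto hwlim (Filter.Eventually.of_forall hwle)
    linarith
  rw [tendsto_order]
  refine ⟨hlow, ?_⟩
  intro x hx
  filter_upwards [hulim.eventually_lt_const hx] with n hn
  exact lt_of_le_of_lt (hqu n) hn

end PhiProof6

/-- Hadamard directional differentiability of `φ_r`, with derivative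
`M ↦ min_{U ∈ Ψ(A)} 2 tr((A U)ᵀ M U)`. -/
theorem phi_hadamard_directional_deriv {m k : ℕ} (hk : k ≤ m) (r : ℕ) (hr : r < k)
    (A M : Matrix (Fin m) (Fin k) ℝ) (Ms : ℕ → Matrix (Fin m) (Fin k) ℝ) (t : ℕ → ℝ)
    (htpos : ∀ n, 0 < t n) (ht0 : Tendsto t atTop (nhds 0))
    (hMs : Tendsto Ms atTop (nhds M)) :
    Tendsto (fun n => (phi r (A + t n • Ms n) - phi r A) / t n) atTop
      (nhds (phiDeriv r A M)) := by
  exact PhiProof6.main hk r hr A M Ms t htpos ht0 hMs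
end

section
/- Let Π ∈ M^{m×k} with rank(Π) ≤ r and M ∈ M^{m×k}. Then min over U ∈ Ψ(Π) and V ∈ M^{k×(k−r)} of ‖ΠV + MU‖² equals Σ_{j=r−r₀+1}^{k−r₀} σ_j²(P₂ᵀ M Q₂), where r₀ = rank(Π), Ψ(Π) = argmin_{U ∈ S^{k×(k−r)}} ‖ΠU‖², and P₂, Q₂ consist of the left/right singular vectors of Π associated with its zero singular values. -/
open Matrix Filter Topology

/-! ### Auxiliary lemmas -/

lemma frobNormSq_eq_sum {m k : ℕ} (A : Matrix (Fin m) (Fin k) ℝ) :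
    frobNormSq A = ∑ j, ∑ i, A i j ^ 2 := by
  simp [frobNormSq, Matrix.trace, Matrix.diag, Matrix.mul_apply, sq]

lemma frobNormSq_nonneg {m k : ℕ} (A : Matrix (Fin m) (Fin k) ℝ) : 0 ≤ frobNormSq A := by
  rw [frobNormSq_eq_sum]
  positivity

lemma frobNormSq_eq_zero {m k : ℕ} {A : Matrix (Fin m) (Fin k) ℝ}
    (h : frobNormSq A = 0) : A = 0 := by
  rw [frobNormSq_eq_sum] at h
  ext i j
  have h1 : ∀ j ∈ (Finset.univ : Finset (Fin k)), (0:ℝ) ≤ ∑ i, A i j ^ 2 := by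
    intro j _; positivity
  have h2 := (Finset.sum_eq_zero_iff_of_nonneg h1).mp h j (Finset.mem_univ j)
  have h3 : ∀ i ∈ (Finset.univ : Finset (Fin m)), (0:ℝ) ≤ A i j ^ 2 := by
    intro i _; positivity
  have := (Finset.sum_eq_zero_iff_of_nonneg h3).mp h2 i (Finset.mem_univ i)
  simpa [pow_eq_zero_iff] using this

lemma frobNormSq_mul_isometry {a b c : ℕ} {P : Matrix (Fin a) (Fin b) ℝ}
    (hP : Pᵀ * P = 1) (Y : Matrix (Fin b) (Fin c) ℝ) :
    frobNormSq (P * Y) = frobNormSq Y := by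
  unfold frobNormSq
  rw [Matrix.transpose_mul, Matrix.mul_assoc, ← Matrix.mul_assoc Pᵀ, hP, Matrix.one_mul]

lemma quad_diag_nonneg {n p : ℕ} {S : Matrix (Fin n) (Fin n) ℝ} (hS : S.PosSemidef)
    (X : Matrix (Fin n) (Fin p) ℝ) (j : Fin p) : 0 ≤ (Xᵀ * S * X) j j := by
  have h := hS.dotProduct_mulVec_nonneg (fun l => X l j)
  have heq : (Xᵀ * S * X) j j = star (fun l => X l j) ⬝ᵥ S *ᵥ (fun l => X l j) := by
    simp [Matrix.mul_apply, Matrix.mulVec, dotProduct, Finset.mul_sum,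
      Finset.sum_mul, mul_comm, mul_left_comm]
    rw [Finset.sum_comm]
    exact Finset.sum_congr rfl fun y _ => Finset.sum_congr rfl fun x _ => by ring
  rw [heq]; exact h

lemma trace_conj_nonneg {n p : ℕ} {S : Matrix (Fin n) (Fin n) ℝ} (hS : S.PosSemidef)
    (X : Matrix (Fin n) (Fin p) ℝ) : 0 ≤ Matrix.trace (Xᵀ * S * X) := by
  rw [Matrix.trace]
  exact Finset.sum_nonneg fun j _ => quad_diag_nonneg hS X j

lemma posSemidef_one_sub_self_mul_transpose {a b : ℕ} {P : Matrix (Fin a) (Fin b) ℝ}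
    (hP : Pᵀ * P = 1) : (1 - P * Pᵀ).PosSemidef := by
  have hsym : (1 - P * Pᵀ)ᵀ = 1 - P * Pᵀ := by
    simp [Matrix.transpose_sub, Matrix.transpose_mul]
  have hidem : (1 - P * Pᵀ)ᵀ * (1 - P * Pᵀ) = 1 - P * Pᵀ := by
    rw [hsym]
    have h2 : (P * Pᵀ) * (P * Pᵀ) = P * Pᵀ := by
      rw [Matrix.mul_assoc, ← Matrix.mul_assoc Pᵀ, hP, Matrix.one_mul]
    rw [Matrix.sub_mul, Matrix.mul_sub, Matrix.mul_sub, h2]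
    simp
  have h := Matrix.posSemidef_conjTranspose_mul_self (1 - P * Pᵀ)
  rwa [Matrix.conjTranspose_eq_transpose_of_trivial, hidem] at h

lemma frobNormSq_proj_le {a b c : ℕ} {P : Matrix (Fin a) (Fin b) ℝ}
    (hP : Pᵀ * P = 1) (X : Matrix (Fin a) (Fin c) ℝ) :
    frobNormSq (Pᵀ * X) ≤ frobNormSq X := by
  have h0 := trace_conj_nonneg (posSemidef_one_sub_self_mul_transpose hP) X
  have hexp : Xᵀ * (1 - P * Pᵀ) * X = Xᵀ * X - (Pᵀ * X)ᵀ * (Pᵀ * X) := by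
    rw [Matrix.transpose_mul, Matrix.transpose_transpose, Matrix.mul_sub, Matrix.mul_one,
      Matrix.sub_mul, Matrix.mul_assoc, Matrix.mul_assoc, Matrix.mul_assoc]
  rw [hexp, Matrix.trace_sub] at h0
  unfold frobNormSq
  linarith

lemma filter_lt_eq_map {n d : ℕ} (hdn : d ≤ n) :
    Finset.univ.filter (fun j : Fin n => (j : ℕ) < d) =
      Finset.map (Fin.castLEEmb hdn) Finset.univ := by
  ext j
  simp only [Finset.mem_filter, Finset.mem_univ, true_and, Finset.mem_map, Fin.castLEEmb_apply]
  constructor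
  · intro hj; exact ⟨⟨(j : ℕ), hj⟩, by ext; simp⟩
  · rintro ⟨j', rfl⟩; exact j'.2

lemma weight_bound {n d : ℕ} (hd0 : 0 < d) (hdn : d ≤ n) (ν t : Fin n → ℝ)
    (hmono : Monotone ν) (ht0 : ∀ i, 0 ≤ t i) (ht1 : ∀ i, t i ≤ 1)
    (hsum : ∑ i, t i = d) :
    ∑ j ∈ Finset.univ.filter (fun j : Fin n => (j : ℕ) < d), ν j ≤ ∑ i, ν i * t i := by
  classical
  set c : ℝ := ν ⟨d - 1, by omega⟩ with hc
  have hcard : (Finset.univ.filter (fun j : Fin n => (j : ℕ) < d)).card = d := by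
    rw [filter_lt_eq_map hdn]; simp
  have key : ∑ j ∈ Finset.univ.filter (fun j : Fin n => (j : ℕ) < d), (ν j - c)
      ≤ ∑ i, (ν i - c) * t i := by
    rw [← Finset.sum_filter_add_sum_filter_not Finset.univ (fun j : Fin n => (j : ℕ) < d)
      (fun i => (ν i - c) * t i)]
    have h1 : ∑ j ∈ Finset.univ.filter (fun j : Fin n => (j : ℕ) < d), (ν j - c)
        ≤ ∑ j ∈ Finset.univ.filter (fun j : Fin n => (j : ℕ) < d), (ν j - c) * t j := by
      apply Finset.sum_le_sum
      intro j hj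
      have hjd : (j : ℕ) < d := (Finset.mem_filter.mp hj).2
      have hνc : ν j ≤ c := hmono (by simp only [Fin.le_def]; omega)
      nlinarith [ht0 j, ht1 j]
    have h2 : (0:ℝ) ≤ ∑ j ∈ Finset.univ.filter (fun j : Fin n => ¬ (j : ℕ) < d),
        (ν j - c) * t j := by
      apply Finset.sum_nonneg
      intro j hj
      have hjd : ¬ (j : ℕ) < d := (Finset.mem_filter.mp hj).2
      have hνc : c ≤ ν j := hmono (by simp only [Fin.le_def]; omega)
      nlinarith [ht0 j]
    linarith
  have e1 : ∑ i, (ν i - c) * t i = (∑ i, ν i * t i) - c * ∑ i, t i := by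
    rw [Finset.mul_sum, ← Finset.sum_sub_distrib]
    exact Finset.sum_congr rfl fun i _ => by ring
  have e2 : ∑ j ∈ Finset.univ.filter (fun j : Fin n => (j : ℕ) < d), (ν j - c)
      = (∑ j ∈ Finset.univ.filter (fun j : Fin n => (j : ℕ) < d), ν j) - c * d := by
    rw [Finset.sum_sub_distrib, Finset.sum_const, hcard, nsmul_eq_mul]
    ring
  rw [e1, hsum, e2] at key
  linarith

lemma trace_quad_eq_weights {n d : ℕ} (D : Fin n → ℝ) (Y : Matrix (Fin n) (Fin d) ℝ) :
    Matrix.trace (Yᵀ * Matrix.diagonal D * Y) = ∑ i, D i * ∑ j, Y i j ^ 2 := by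
  rw [Matrix.mul_assoc, Matrix.trace]
  simp only [Matrix.diag, Matrix.mul_apply, Matrix.transpose_apply, Matrix.diagonal_mul]
  rw [Finset.sum_comm]
  refine Finset.sum_congr rfl fun i _ => ?_
  rw [Finset.mul_sum]
  refine Finset.sum_congr rfl fun j _ => ?_
  rw [show ∑ x : Fin n, Matrix.diagonal D i x * Y x j = D i * Y i j by
    simp [Matrix.diagonal_apply, ite_mul, Finset.sum_ite_eq]]
  ring

lemma trace_lower_bound {n d : ℕ} (hd0 : 0 < d) (hdn : d ≤ n)
    (S : Matrix (Fin n) (Fin n) ℝ) (hS : S.IsHermitian)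
    (W : Matrix (Fin n) (Fin d) ℝ) (hW : Wᵀ * W = 1) :
    ∑ j ∈ Finset.univ.filter (fun j : Fin n => (j : ℕ) < d),
        hS.eigenvalues (Tuple.sort hS.eigenvalues j) ≤ Matrix.trace (Wᵀ * S * W) := by
  classical
  set μ := hS.eigenvalues with hμ
  set σ := Tuple.sort μ with hσ
  have hmono : Monotone (μ ∘ σ) := Tuple.monotone_sort μ
  set V : Matrix (Fin n) (Fin n) ℝ := (hS.eigenvectorUnitary : Matrix (Fin n) (Fin n) ℝ) with hV
  have hVl : Vᵀ * V = 1 := by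
    rw [hV, ← Matrix.conjTranspose_eq_transpose_of_trivial]
    exact Matrix.mem_unitaryGroup_iff'.mp hS.eigenvectorUnitary.2
  have hVr : V * Vᵀ = 1 := by
    rw [hV, ← Matrix.conjTranspose_eq_transpose_of_trivial]
    exact Matrix.mem_unitaryGroup_iff.mp hS.eigenvectorUnitary.2
  have hspec : S = V * Matrix.diagonal μ * Vᵀ := by
    have h := hS.spectral_theorem
    rw [hμ, hV]
    simpa [Matrix.star_eq_conjTranspose, Matrix.conjTranspose_eq_transpose_of_trivial, Function.comp] using h
  set Y := Vᵀ * W with hY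
  set t : Fin n → ℝ := fun i => ∑ j, Y i j ^ 2 with ht
  have htrace : Matrix.trace (Wᵀ * S * W) = ∑ i, μ i * t i := by
    rw [hspec, show Wᵀ * (V * Matrix.diagonal μ * Vᵀ) * W = Yᵀ * Matrix.diagonal μ * Y by
      simp only [hY, Matrix.transpose_mul, Matrix.transpose_transpose, Matrix.mul_assoc]]
    exact trace_quad_eq_weights μ Y
  have ht0 : ∀ i, 0 ≤ t i := fun i => by positivity
  have hYY : Yᵀ * Y = 1 := by
    rw [hY, Matrix.transpose_mul, Matrix.transpose_transpose, Matrix.mul_assoc,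
      ← Matrix.mul_assoc V, hVr, Matrix.one_mul, hW]
  have htsum : ∑ i, t i = (d : ℝ) := by
    have h1 : ∑ i, t i = Matrix.trace (Yᵀ * Y) := by
      rw [Matrix.trace]
      simp only [Matrix.diag, Matrix.mul_apply, Matrix.transpose_apply, ht, sq]
      rw [Finset.sum_comm]
    rw [h1, hYY, Matrix.trace_one]
    simp
  have ht1 : ∀ i, t i ≤ 1 := by
    intro i
    have hpsd : (1 - W * Wᵀ).PosSemidef := posSemidef_one_sub_self_mul_transpose hW
    have hdg := quad_diag_nonneg hpsd V i
    have hmat : Vᵀ * (1 - W * Wᵀ) * V = 1 - Y * Yᵀ := by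
      rw [Matrix.mul_sub, Matrix.mul_one, Matrix.sub_mul, hVl, hY, Matrix.transpose_mul,
        Matrix.transpose_transpose]
      simp only [Matrix.mul_assoc]
    rw [hmat] at hdg
    have hYYt : (Y * Yᵀ) i i = t i := by
      simp [Matrix.mul_apply, ht, sq]
    have h1 : ((1 : Matrix (Fin n) (Fin n) ℝ) - Y * Yᵀ) i i = 1 - t i := by
      simp [Matrix.sub_apply, Matrix.one_apply_eq, hYYt]
    rw [h1] at hdg
    linarith
  have hwb := weight_bound hd0 hdn (μ ∘ σ) (t ∘ σ) hmono
    (fun i => ht0 _) (fun i => ht1 _)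
    (by simp only [Function.comp_apply]; rw [Equiv.sum_comp σ t, htsum])
  have hre : ∑ i, (μ ∘ σ) i * (t ∘ σ) i = ∑ i, μ i * t i := by
    simpa using Equiv.sum_comp σ (fun i => μ i * t i)
  rw [htrace]
  calc ∑ j ∈ Finset.univ.filter (fun j : Fin n => (j : ℕ) < d), μ (σ j)
      ≤ ∑ i, (μ ∘ σ) i * (t ∘ σ) i := by simpa using hwb
    _ = ∑ i, μ i * t i := hre

lemma trace_exists_min {n d : ℕ} (hdn : d ≤ n)
    (S : Matrix (Fin n) (Fin n) ℝ) (hS : S.IsHermitian) :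
    ∃ W : Matrix (Fin n) (Fin d) ℝ, Wᵀ * W = 1 ∧
      Matrix.trace (Wᵀ * S * W) =
        ∑ j ∈ Finset.univ.filter (fun j : Fin n => (j : ℕ) < d),
          hS.eigenvalues (Tuple.sort hS.eigenvalues j) := by
  classical
  set μ := hS.eigenvalues with hμ
  set σ := Tuple.sort μ with hσ
  set V : Matrix (Fin n) (Fin n) ℝ := (hS.eigenvectorUnitary : Matrix (Fin n) (Fin n) ℝ) with hV
  have hVl : Vᵀ * V = 1 := by
    rw [hV, ← Matrix.conjTranspose_eq_transpose_of_trivial]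
    exact Matrix.mem_unitaryGroup_iff'.mp hS.eigenvectorUnitary.2
  have hspec : S = V * Matrix.diagonal μ * Vᵀ := by
    have h := hS.spectral_theorem
    rw [hμ, hV]
    simpa [Matrix.star_eq_conjTranspose, Matrix.conjTranspose_eq_transpose_of_trivial, Function.comp] using h
  set E : Matrix (Fin n) (Fin d) ℝ :=
    Matrix.of (fun i j => if i = σ (Fin.castLE hdn j) then (1:ℝ) else 0) with hE
  have hinj : Function.Injective (fun j : Fin d => σ (Fin.castLE hdn j)) :=
    σ.injective.comp (Fin.castLE_injective hdn)
  have hEE : Eᵀ * E = 1 := by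
    ext j j'
    simp only [Matrix.mul_apply, Matrix.transpose_apply, hE, Matrix.of_apply, ite_mul, one_mul,
      zero_mul, Finset.sum_ite_eq', Finset.mem_univ, if_true]
    by_cases h : j = j'
    · subst h; simp [Matrix.one_apply_eq]
    · have : ¬ σ (Fin.castLE hdn j) = σ (Fin.castLE hdn j') := fun hc => h (hinj hc)
      rw [if_neg this, Matrix.one_apply_ne h]
  refine ⟨V * E, ?_, ?_⟩
  · rw [Matrix.transpose_mul, Matrix.mul_assoc, ← Matrix.mul_assoc Vᵀ, hVl, Matrix.one_mul, hEE]
  · rw [hspec, show (V * E)ᵀ * (V * Matrix.diagonal μ * Vᵀ) * (V * E)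
        = Eᵀ * (Vᵀ * V) * Matrix.diagonal μ * (Vᵀ * V) * E by
      simp only [Matrix.transpose_mul, Matrix.mul_assoc]]
    simp only [hVl, Matrix.mul_one]
    have htr : Matrix.trace (Eᵀ * Matrix.diagonal μ * E) = ∑ j : Fin d, μ (σ (Fin.castLE hdn j)) := by
      rw [Matrix.mul_assoc, Matrix.trace]
      refine Finset.sum_congr rfl fun j _ => ?_
      simp [Matrix.diag, Matrix.mul_apply, hE, Matrix.diagonal_apply, ite_mul, mul_ite,
        Finset.sum_ite_eq', Finset.sum_ite_eq]
    rw [htr, filter_lt_eq_map hdn, Finset.sum_map]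
    rfl

lemma phi_eq_low_sum {m' k' : ℕ} (r' : ℕ) (B : Matrix (Fin m') (Fin k') ℝ) :
    phi r' B = ∑ j ∈ Finset.univ.filter (fun j : Fin k' => (j : ℕ) < k' - r'),
      (transpose_mul_self_isHermitian B).eigenvalues
        (Tuple.sort ((transpose_mul_self_isHermitian B).eigenvalues) j) := by
  classical
  have hnn : ∀ j, 0 ≤ (transpose_mul_self_isHermitian B).eigenvalues j := by
    intro j
    have hps : (Bᵀ * B).PosSemidef := by
      have h := Matrix.posSemidef_conjTranspose_mul_self B
      rwa [Matrix.conjTranspose_eq_transpose_of_trivial] at h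
    exact hps.eigenvalues_nonneg j
  unfold phi sv
  rw [Finset.sum_congr rfl (fun j _ => Real.sq_sqrt (hnn _))]
  refine Finset.sum_nbij' (fun j => j.rev) (fun j => j.rev) ?_ ?_ ?_ ?_ ?_
  · intro a ha
    have h := (Finset.mem_filter.mp ha).2
    simp only [Finset.mem_filter, Finset.mem_univ, true_and, Fin.val_rev]
    have := a.isLt
    omega
  · intro a ha
    have h := (Finset.mem_filter.mp ha).2
    simp only [Finset.mem_filter, Finset.mem_univ, true_and, Fin.val_rev]
    have := a.isLt
    omega
  · intro a _; exact Fin.rev_rev a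
  · intro a _; exact Fin.rev_rev a
  · intro a _; rfl

lemma col_factor {a b c : ℕ} (A : Matrix (Fin a) (Fin b) ℝ) (U : Matrix (Fin b) (Fin c) ℝ)
    (j : Fin c) (i : Fin a) : (A * U) i j = (A *ᵥ (fun l => U l j)) i := by
  simp [Matrix.mul_apply, Matrix.mulVec, dotProduct]

lemma exists_factor_Q {m k q d : ℕ} (A : Matrix (Fin m) (Fin k) ℝ)
    (Q₂ : Matrix (Fin k) (Fin q) ℝ) (hq : q = k - A.rank)
    (hQ : Q₂ᵀ * Q₂ = 1) (hAQ : A * Q₂ = 0)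
    (U : Matrix (Fin k) (Fin d) ℝ) (hU : A * U = 0) :
    ∃ W : Matrix (Fin q) (Fin d) ℝ, U = Q₂ * W := by
  classical
  have hrk : A.rank ≤ k := A.rank_le_width
  set f := Matrix.mulVecLin A with hf
  set g := Matrix.mulVecLin Q₂ with hg
  have hginj : Function.Injective g := by
    intro x y hxy
    have h1 : Q₂ᵀ *ᵥ (Q₂ *ᵥ x) = Q₂ᵀ *ᵥ (Q₂ *ᵥ y) := by
      simp only [hg, Matrix.mulVecLin_apply] at hxy
      rw [hxy]
    rwa [Matrix.mulVec_mulVec, Matrix.mulVec_mulVec, hQ, Matrix.one_mulVec,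
      Matrix.one_mulVec] at h1
  have hrange : LinearMap.range g ≤ LinearMap.ker f := by
    rintro x ⟨y, rfl⟩
    simp only [LinearMap.mem_ker, hf, hg, Matrix.mulVecLin_apply, Matrix.mulVec_mulVec, hAQ,
      Matrix.zero_mulVec]
  have hdim1 : Module.finrank ℝ (LinearMap.range g) = q := by
    rw [LinearMap.finrank_range_of_inj hginj]
    simp [Module.finrank_fintype_fun_eq_card]
  have hdim2 : Module.finrank ℝ (LinearMap.range f) = A.rank := rfl
  have hrn := LinearMap.finrank_range_add_finrank_ker f
  rw [hdim2, Module.finrank_fintype_fun_eq_card, Fintype.card_fin] at hrn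
  have heq : LinearMap.range g = LinearMap.ker f := by
    refine Submodule.eq_of_le_of_finrank_le hrange ?_
    rw [hdim1]
    omega
  have hcol : ∀ j : Fin d, ∃ y, Q₂ *ᵥ y = (fun l => U l j) := by
    intro j
    have hmem : (fun l => U l j) ∈ LinearMap.ker f := by
      simp only [LinearMap.mem_ker, hf, Matrix.mulVecLin_apply]
      funext i
      rw [← col_factor A U j i, hU]
      rfl
    rw [← heq] at hmem
    obtain ⟨y, hy⟩ := hmem
    exact ⟨y, hy⟩
  choose w hw using hcol
  refine ⟨Matrix.of (fun i j => w j i), ?_⟩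
  ext i j
  have h := congrFun (hw j) i
  simp only [Matrix.mulVec, dotProduct] at h
  simp only [Matrix.mul_apply, Matrix.of_apply]
  exact h.symm

lemma exists_preimage_A {m k p d : ℕ} (hk : k ≤ m) (A : Matrix (Fin m) (Fin k) ℝ)
    (P₂ : Matrix (Fin m) (Fin p) ℝ) (hp : p = m - A.rank)
    (hP : P₂ᵀ * P₂ = 1) (hPA : P₂ᵀ * A = 0)
    (X : Matrix (Fin m) (Fin d) ℝ) :
    ∃ V : Matrix (Fin k) (Fin d) ℝ, A * V = X - P₂ * (P₂ᵀ * X) := by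
  classical
  have hrk : A.rank ≤ k := A.rank_le_width
  set f := Matrix.mulVecLin A with hf
  set h := Matrix.mulVecLin P₂ᵀ with hh
  have hginj : Function.Injective (Matrix.mulVecLin P₂) := by
    intro x y hxy
    have h1 : P₂ᵀ *ᵥ (P₂ *ᵥ x) = P₂ᵀ *ᵥ (P₂ *ᵥ y) := by
      simp only [Matrix.mulVecLin_apply] at hxy
      rw [hxy]
    rwa [Matrix.mulVec_mulVec, Matrix.mulVec_mulVec, hP, Matrix.one_mulVec,
      Matrix.one_mulVec] at h1
  have hrankP : P₂.rank = p := by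
    rw [Matrix.rank, LinearMap.finrank_range_of_inj hginj]
    simp [Module.finrank_fintype_fun_eq_card]
  have hrange : LinearMap.range f ≤ LinearMap.ker h := by
    rintro x ⟨y, rfl⟩
    simp only [LinearMap.mem_ker, hf, hh, Matrix.mulVecLin_apply, Matrix.mulVec_mulVec, hPA,
      Matrix.zero_mulVec]
  have hdim2 : Module.finrank ℝ (LinearMap.range f) = A.rank := rfl
  have hdimh : Module.finrank ℝ (LinearMap.range h) = p := by
    have := Matrix.rank_transpose P₂
    rw [hrankP] at this
    rw [hh, ← Matrix.rank]
    exact this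
  have hrnh := LinearMap.finrank_range_add_finrank_ker h
  rw [hdimh, Module.finrank_fintype_fun_eq_card, Fintype.card_fin] at hrnh
  have heq : LinearMap.range f = LinearMap.ker h := by
    refine Submodule.eq_of_le_of_finrank_le hrange ?_
    rw [hdim2]
    omega
  have hzero : P₂ᵀ * (X - P₂ * (P₂ᵀ * X)) = 0 := by
    rw [Matrix.mul_sub, ← Matrix.mul_assoc, hP, Matrix.one_mul, sub_self]
  have hcol : ∀ j : Fin d, ∃ y, A *ᵥ y = (fun l => (X - P₂ * (P₂ᵀ * X)) l j) := by
    intro j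
    have hmem : (fun l => (X - P₂ * (P₂ᵀ * X)) l j) ∈ LinearMap.ker h := by
      simp only [LinearMap.mem_ker, hh, Matrix.mulVecLin_apply]
      funext i
      rw [← col_factor P₂ᵀ _ j i, hzero]
      rfl
    rw [← heq] at hmem
    obtain ⟨y, hy⟩ := hmem
    exact ⟨y, hy⟩
  choose v hv using hcol
  refine ⟨Matrix.of (fun i j => v j i), ?_⟩
  ext i j
  have hcf := congrFun (hv j) i
  simp only [Matrix.mulVec, dotProduct] at hcf
  simp only [Matrix.mul_apply, Matrix.of_apply]
  exact hcf

/-- `min_{U ∈ Ψ(A), V} ‖A V + M U‖² = Σ_{j=r−r₀+1}^{k−r₀} σ_j²(P₂ᵀ M Q₂)`. -/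
theorem min_reprentation_second_deriv {m k : ℕ} (hk : k ≤ m) (r : ℕ) (hr : r < k)
    (A : Matrix (Fin m) (Fin k) ℝ) (hrank : A.rank ≤ r)
    (P₂ : Matrix (Fin m) (Fin (m - A.rank)) ℝ) (Q₂ : Matrix (Fin k) (Fin (k - A.rank)) ℝ)
    (hP : P₂ᵀ * P₂ = 1) (hPA : P₂ᵀ * A = 0)
    (hQ : Q₂ᵀ * Q₂ = 1) (hAQ : A * Q₂ = 0)
    (M : Matrix (Fin m) (Fin k) ℝ) :
    IsLeast
      {x : ℝ | ∃ U ∈ argminSet (k - r) A, ∃ V : Matrix (Fin k) (Fin (k - r)) ℝ,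
        x = frobNormSq (A * V + M * U)}
      (phi (r - A.rank) (P₂ᵀ * M * Q₂)) := by
  have hr₀r : A.rank ≤ r := hrank
  have hr₀k : A.rank ≤ k := A.rank_le_width
  set B := P₂ᵀ * M * Q₂ with hB
  have hd0 : 0 < k - r := by omega
  have hdn : k - r ≤ k - A.rank := by omega
  have hphi : phi (r - A.rank) B
      = ∑ j ∈ Finset.univ.filter (fun j : Fin (k - A.rank) => (j : ℕ) < k - r),
          (transpose_mul_self_isHermitian B).eigenvalues
            (Tuple.sort ((transpose_mul_self_isHermitian B).eigenvalues) j) := by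
    rw [phi_eq_low_sum (r - A.rank) B,
      show (k - A.rank) - (r - A.rank) = k - r from by omega]
  obtain ⟨W₀, hW₀, hW₀tr⟩ := trace_exists_min (n := k - A.rank) (d := k - r) hdn
    (Bᵀ * B) (transpose_mul_self_isHermitian B)
  set U₀ := Q₂ * W₀ with hU₀
  have hU₀orth : U₀ᵀ * U₀ = 1 := by
    rw [hU₀, Matrix.transpose_mul, Matrix.mul_assoc, ← Matrix.mul_assoc Q₂ᵀ, hQ,
      Matrix.one_mul, hW₀]
  have hAU₀ : A * U₀ = 0 := by rw [hU₀, ← Matrix.mul_assoc, hAQ, Matrix.zero_mul]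
  have hfrob0 : frobNormSq (0 : Matrix (Fin m) (Fin (k - r)) ℝ) = 0 := by
    simp [frobNormSq]
  have hU₀mem : U₀ ∈ argminSet (k - r) A := by
    refine ⟨hU₀orth, fun V hV => ?_⟩
    rw [hAU₀, hfrob0]
    exact frobNormSq_nonneg _
  constructor
  · obtain ⟨V₀, hV₀⟩ := exists_preimage_A hk A P₂ rfl hP hPA (M * U₀)
    refine ⟨U₀, hU₀mem, -V₀, ?_⟩
    have hsum : A * (-V₀) + M * U₀ = P₂ * (P₂ᵀ * (M * U₀)) := by
      rw [Matrix.mul_neg, hV₀]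
      abel
    rw [hsum, frobNormSq_mul_isometry hP]
    have hBW : P₂ᵀ * (M * U₀) = B * W₀ := by
      rw [hU₀, hB]
      simp only [Matrix.mul_assoc]
    rw [hBW, show frobNormSq (B * W₀) = Matrix.trace (W₀ᵀ * (Bᵀ * B) * W₀) from by
      unfold frobNormSq
      rw [show (B * W₀)ᵀ = W₀ᵀ * Bᵀ from Matrix.transpose_mul B W₀]
      simp only [Matrix.mul_assoc], hW₀tr, hphi]
  · rintro x ⟨U, hUmem, V, rfl⟩
    have hAU : A * U = 0 := by
      have h1 := hUmem.2 U₀ hU₀orth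
      rw [hAU₀, hfrob0] at h1
      exact frobNormSq_eq_zero (le_antisymm h1 (frobNormSq_nonneg _))
    obtain ⟨W, hUW⟩ := exists_factor_Q A Q₂ rfl hQ hAQ U hAU
    have hW1 : Wᵀ * W = 1 := by
      have h1 := hUmem.1
      rw [hUW, Matrix.transpose_mul, Matrix.mul_assoc, ← Matrix.mul_assoc Q₂ᵀ, hQ,
        Matrix.one_mul] at h1
      exact h1
    have hproj : P₂ᵀ * (A * V + M * U) = B * W := by
      rw [Matrix.mul_add, ← Matrix.mul_assoc, hPA, Matrix.zero_mul, hUW, hB, zero_add]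
      simp only [Matrix.mul_assoc]
    calc phi (r - A.rank) B
        = ∑ j ∈ Finset.univ.filter (fun j : Fin (k - A.rank) => (j : ℕ) < k - r),
            (transpose_mul_self_isHermitian B).eigenvalues
              (Tuple.sort ((transpose_mul_self_isHermitian B).eigenvalues) j) := hphi
      _ ≤ Matrix.trace (Wᵀ * (Bᵀ * B) * W) :=
          trace_lower_bound hd0 hdn (Bᵀ * B) (transpose_mul_self_isHermitian B) W hW1
      _ = frobNormSq (B * W) := by
          unfold frobNormSq
          rw [show (B * W)ᵀ = Wᵀ * Bᵀ from Matrix.transpose_mul B W]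
          simp only [Matrix.mul_assoc]
      _ = frobNormSq (P₂ᵀ * (A * V + M * U)) := by rw [hproj]
      _ ≤ frobNormSq (A * V + M * U) := frobNormSq_proj_le hP _
end

section
/- Let Π ∈ M^{m×k} with rank(Π) ≤ r. If rank(Π) = r, then there exists a bilinear map Φ''_{r,Π} : M^{m×k} × M^{m×k} → ℝ such that φ''_{r,Π}(M) = Φ''_{r,Π}(M, M) for all M; explicitly Φ''_{r,Π}(M₁, M₂) = tr(Q₂ᵀ M₁ᵀ P₂ P₂ᵀ M₂ Q₂). If rank(Π) < r, then no such bilinear map exists. -/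
open Matrix Filter Topology

/-! ### Auxiliary lemmas -/

/-- trace of a real symmetric matrix is the sum of its eigenvalues -/
lemma aux_trace_eq_sum_eigenvalues {n : ℕ} {A : Matrix (Fin n) (Fin n) ℝ}
    (hA : A.IsHermitian) : A.trace = ∑ i, hA.eigenvalues i := by
  simpa using hA.trace_eq_sum_eigenvalues

/-- eigenvalues of an idempotent symmetric matrix are 0 or 1 -/
lemma aux_eig_idem {n : ℕ} {A : Matrix (Fin n) (Fin n) ℝ} (hA : A.IsHermitian)
    (h : A * A = A) (i : Fin n) : hA.eigenvalues i = 0 ∨ hA.eigenvalues i = 1 := by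
  have hv := hA.mulVec_eigenvectorBasis i
  have hv2 : A *ᵥ (A *ᵥ ⇑(hA.eigenvectorBasis i)) = (A * A) *ᵥ ⇑(hA.eigenvectorBasis i) := by
    rw [Matrix.mulVec_mulVec]
  rw [h, hv] at hv2
  rw [Matrix.mulVec_smul, hv, smul_smul] at hv2
  have hne : ⇑(hA.eigenvectorBasis i) ≠ 0 := by
    have := hA.eigenvectorBasis.orthonormal.ne_zero i
    intro hc
    apply this
    ext x
    exact congrFun hc x
  have : (hA.eigenvalues i * hA.eigenvalues i - hA.eigenvalues i) • ⇑(hA.eigenvectorBasis i) = 0 := by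
    rw [sub_smul, hv2, sub_self]
  rcases smul_eq_zero.mp this with h0 | h0
  · have : hA.eigenvalues i * (hA.eigenvalues i - 1) = 0 := by ring_nf; linarith [h0]
    rcases mul_eq_zero.mp this with h1 | h1
    · exact Or.inl h1
    · exact Or.inr (by linarith)
  · exact absurd h0 hne

/-- sum of an `{0,1}`-indicator of an initial segment -/
lemma aux_sum_ind {n : ℕ} (s : ℕ) (hs : s ≤ n) (v : Fin n → ℝ)
    (hv : ∀ j, v j = if (j : ℕ) < s then 1 else 0) : ∑ j, v j = (s : ℝ) := by
  have : ∑ j : Fin n, v j = ∑ j ∈ Finset.range n, (if j < s then (1:ℝ) else 0) := by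
    rw [← Fin.sum_univ_eq_sum_range]
    exact Finset.sum_congr rfl fun j _ => hv j
  rw [this, Finset.sum_boole]
  have : (Finset.range n).filter (fun j => j < s) = Finset.range s := by
    ext j; simp [Finset.mem_filter, Finset.mem_range]; omega
  rw [this]
  simp

/-- Main computation: if the eigenvalues of `NᵀN` are all 0 or 1 and the trace of `NᵀN`
is `s`, then `phi t N = s - t` (truncated subtraction). -/
lemma aux_phi_eq {m k : ℕ} (N : Matrix (Fin m) (Fin k) ℝ) (s t : ℕ)
    (h01 : ∀ i, (transpose_mul_self_isHermitian N).eigenvalues i = 0 ∨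
      (transpose_mul_self_isHermitian N).eigenvalues i = 1)
    (htr : Matrix.trace (Nᵀ * N) = (s : ℝ)) :
    phi t N = ((s - t : ℕ) : ℝ) := by
  set H := transpose_mul_self_isHermitian N with hH
  set f := H.eigenvalues with hf
  set σ := Tuple.sort f with hσ
  set g : Fin k → ℝ := f ∘ σ with hg
  have hg01 : ∀ i, g i = 0 ∨ g i = 1 := fun i => h01 (σ i)
  have hmono : Monotone g := Tuple.monotone_sort f
  -- sum of g
  have hsumg : ∑ i, g i = (s : ℝ) := by
    rw [hg]
    rw [show ∑ i, (f ∘ σ) i = ∑ i, f i from Equiv.sum_comp σ f]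
    rw [← htr, aux_trace_eq_sum_eigenvalues H]
  -- cardinality
  set S := Finset.univ.filter (fun i => g i = 1) with hS
  have hcard : (S.card : ℝ) = (s : ℝ) := by
    rw [← hsumg]
    rw [show ∑ i, g i = ∑ i, (if g i = 1 then (1:ℝ) else 0) by
      refine Finset.sum_congr rfl fun i _ => ?_
      rcases hg01 i with h | h <;> simp [h]]
    rw [Finset.sum_boole]
  have hcards : S.card = s := by exact_mod_cast hcard
  have hsk : s ≤ k := by
    rw [← hcards]
    calc S.card ≤ Finset.univ.card := Finset.card_filter_le _ _
    _ = k := by simp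
  -- threshold characterization
  have hkey : ∀ i : Fin k, g i = if k ≤ (i : ℕ) + s then 1 else 0 := by
    intro i
    by_cases hc : k ≤ (i : ℕ) + s
    · simp only [hc, if_true]
      by_contra hgi
      have hgi0 : g i = 0 := (hg01 i).resolve_right hgi
      have hsub : S ⊆ Finset.Ioi i := by
        intro j hj
        rw [Finset.mem_filter] at hj
        rw [Finset.mem_Ioi]
        by_contra hij
        push_neg at hij
        have := hmono hij
        rw [hgi0, hj.2] at this
        linarith
      have := Finset.card_le_card hsub
      rw [hcards, Fin.card_Ioi] at this
      have := i.isLt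
      omega
    · simp only [hc, if_false]
      by_contra hgi
      have hgi1 : g i = 1 := (hg01 i).resolve_left hgi
      have hsub : Finset.Ici i ⊆ S := by
        intro j hj
        rw [Finset.mem_Ici] at hj
        rw [Finset.mem_filter]
        refine ⟨Finset.mem_univ _, ?_⟩
        have := hmono hj
        rw [hgi1] at this
        rcases hg01 j with h | h
        · rw [h] at this; linarith
        · exact h
      have := Finset.card_le_card hsub
      rw [hcards, Fin.card_Ici] at this
      have := i.isLt
      omega
  -- compute phi
  have hsv : ∀ j : Fin k, sv N j ^ 2 = g j.rev := by
    intro j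
    have : sv N j = Real.sqrt (g j.rev) := rfl
    rw [this, Real.sq_sqrt]
    rcases hg01 j.rev with h | h <;> rw [h] <;> norm_num
  unfold phi
  rw [show ∑ j ∈ Finset.univ.filter (fun j : Fin k => t ≤ (j : ℕ)), sv N j ^ 2 =
      ∑ j : Fin k, (if t ≤ (j : ℕ) ∧ (j : ℕ) < s then (1:ℝ) else 0) by
    rw [Finset.sum_filter]
    refine Finset.sum_congr rfl fun j _ => ?_
    rw [hsv j, hkey j.rev, Fin.val_rev]
    have hjk := j.isLt
    split_ifs <;> first | rfl | (exfalso; omega)]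
  rw [Fin.sum_univ_eq_sum_range (fun j => if t ≤ j ∧ j < s then (1:ℝ) else 0),
    Finset.sum_boole]
  rw [show (Finset.range k).filter (fun j => t ≤ j ∧ j < s) = Finset.Ico t s by
    ext j; simp [Finset.mem_filter, Finset.mem_range, Finset.mem_Ico]; omega]
  simp [Nat.card_Ico]

/-- embedding of a "diagonal" into a rectangular matrix -/
noncomputable def embd (m : ℕ) {k : ℕ} (d : Fin k → ℝ) : Matrix (Fin m) (Fin k) ℝ :=
  Matrix.of fun i j => if (i : ℕ) = (j : ℕ) then d j else 0

lemma embd_add (m : ℕ) {k : ℕ} (d₁ d₂ : Fin k → ℝ) :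
    embd m (d₁ + d₂) = embd m d₁ + embd m d₂ := by
  ext i j
  simp only [embd, Matrix.of_apply, Matrix.add_apply, Pi.add_apply]
  split <;> simp

lemma embd_sub (m : ℕ) {k : ℕ} (d₁ d₂ : Fin k → ℝ) :
    embd m (d₁ - d₂) = embd m d₁ - embd m d₂ := by
  ext i j
  simp only [embd, Matrix.of_apply, Matrix.sub_apply, Pi.sub_apply]
  split <;> simp

lemma embd_gram {m k : ℕ} (hk : k ≤ m) (d : Fin k → ℝ) :
    (embd m d)ᵀ * embd m d = Matrix.diagonal (fun j => d j ^ 2) := by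
  ext a b
  rw [Matrix.mul_apply]
  have ha : (a : ℕ) < m := lt_of_lt_of_le a.isLt hk
  rw [Finset.sum_eq_single (⟨(a : ℕ), ha⟩ : Fin m)]
  · simp only [Matrix.transpose_apply, embd, Matrix.of_apply, Matrix.diagonal_apply]
    by_cases hab : a = b
    · subst hab; simp [pow_two]
    · have : (a : ℕ) ≠ (b : ℕ) := fun h => hab (Fin.ext h)
      simp [this, hab]
  · intro i _ hi
    have : (i : ℕ) ≠ (a : ℕ) := by
      intro h; apply hi; exact Fin.ext h
    simp [Matrix.transpose_apply, embd, this]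
  · intro h; exact absurd (Finset.mem_univ _) h

/-- `phi` of an embedded 0/1-diagonal -/
lemma aux_phi_embd {m k : ℕ} (hk : k ≤ m) (s t : ℕ) (d : Fin k → ℝ)
    (h01 : ∀ j, d j ^ 2 = 0 ∨ d j ^ 2 = 1)
    (htr : ∑ j, d j ^ 2 = (s : ℝ)) :
    phi t (embd m d) = ((s - t : ℕ) : ℝ) := by
  have hgram := embd_gram hk d
  have hidem : ((embd m d)ᵀ * embd m d) * ((embd m d)ᵀ * embd m d) = (embd m d)ᵀ * embd m d := by
    have hpt : ∀ j, d j ^ 2 * d j ^ 2 = d j ^ 2 := fun j => by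
      rcases h01 j with h | h <;> rw [h] <;> ring
    rw [hgram, Matrix.diagonal_mul_diagonal]
    ext i j
    by_cases hij : i = j
    · subst hij
      simp [Matrix.diagonal_apply_eq, hpt]
    · simp [Matrix.diagonal_apply_ne _ hij]
  refine aux_phi_eq _ s t (fun i => aux_eig_idem _ hidem i) ?_
  rw [hgram, Matrix.trace_diagonal, htr]

/-- `phi 0` is the squared Frobenius norm -/
lemma aux_phi_zero {m k : ℕ} (N : Matrix (Fin m) (Fin k) ℝ) :
    phi 0 N = Matrix.trace (Nᵀ * N) := by
  have hpsd : (Nᵀ * N).PosSemidef := by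
    have := Matrix.posSemidef_conjTranspose_mul_self N
    rwa [Matrix.conjTranspose_eq_transpose_of_trivial] at this
  set H := transpose_mul_self_isHermitian N with hH
  set f := H.eigenvalues with hf
  set σ := Tuple.sort f with hσ
  unfold phi
  rw [Finset.filter_true_of_mem (fun j _ => Nat.zero_le _)]
  have hsv : ∀ j : Fin k, sv N j ^ 2 = f (σ j.rev) := by
    intro j
    have : sv N j = Real.sqrt (f (σ j.rev)) := rfl
    rw [this, Real.sq_sqrt (hpsd.eigenvalues_nonneg _)]
  rw [Finset.sum_congr rfl (fun j _ => hsv j)]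
  have : ∑ j : Fin k, f (σ j.rev) = ∑ j, f j := by
    rw [show (fun j : Fin k => f (σ j.rev)) = f ∘ (Fin.revPerm.trans σ) from rfl]
    exact Equiv.sum_comp (Fin.revPerm.trans σ) f
  rw [this, aux_trace_eq_sum_eigenvalues H]

theorem second_deriv_bilinear_iff {m k : ℕ} (hk : k ≤ m) (r : ℕ) (hr : r < k)
    (A : Matrix (Fin m) (Fin k) ℝ) (hrank : A.rank ≤ r)
    (P₂ : Matrix (Fin m) (Fin (m - A.rank)) ℝ) (Q₂ : Matrix (Fin k) (Fin (k - A.rank)) ℝ)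
    (hP : P₂ᵀ * P₂ = 1) (hPA : P₂ᵀ * A = 0)
    (hQ : Q₂ᵀ * Q₂ = 1) (hAQ : A * Q₂ = 0) :
    (A.rank = r →
      ∃ B : Matrix (Fin m) (Fin k) ℝ →ₗ[ℝ] Matrix (Fin m) (Fin k) ℝ →ₗ[ℝ] ℝ,
        (∀ M, phi (r - A.rank) (P₂ᵀ * M * Q₂) = B M M) ∧
        (∀ M₁ M₂, B M₁ M₂ = Matrix.trace (Q₂ᵀ * M₁ᵀ * P₂ * P₂ᵀ * M₂ * Q₂))) ∧
    (A.rank < r →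
      ¬ ∃ B : Matrix (Fin m) (Fin k) ℝ →ₗ[ℝ] Matrix (Fin m) (Fin k) ℝ →ₗ[ℝ] ℝ,
        ∀ M, phi (r - A.rank) (P₂ᵀ * M * Q₂) = B M M) := by
  constructor
  · -- rank = r
    intro hrr
    refine ⟨LinearMap.mk₂ ℝ
      (fun M₁ M₂ => Matrix.trace (Q₂ᵀ * M₁ᵀ * P₂ * P₂ᵀ * M₂ * Q₂))
      (fun M₁ M₁' M₂ => by
        simp [Matrix.transpose_add, Matrix.add_mul, Matrix.mul_add, Matrix.trace_add])
      (fun c M₁ M₂ => by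
        simp [Matrix.transpose_smul, Matrix.smul_mul, Matrix.mul_smul, Matrix.trace_smul])
      (fun M₁ M₂ M₂' => by
        simp [Matrix.mul_add, Matrix.add_mul, Matrix.trace_add])
      (fun c M₁ M₂ => by
        simp [Matrix.mul_smul, Matrix.smul_mul, Matrix.trace_smul]), ?_, ?_⟩
    · intro M
      rw [show r - A.rank = 0 by omega]
      rw [aux_phi_zero]
      rw [LinearMap.mk₂_apply]
      simp only [Matrix.transpose_mul, Matrix.transpose_transpose, Matrix.mul_assoc]
    · intro M₁ M₂; rfl
  · -- rank < r
    intro hlt ⟨B, hB⟩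
    set t := r - A.rank with hT
    have ht1 : 1 ≤ t := by omega
    have htn : t + 1 ≤ k - A.rank := by
      have := A.rank_le_card_width
      simp at this
      omega
    have hmn : k - A.rank ≤ m - A.rank := by
      have := A.rank_le_card_width
      simp at this
      omega
    have hkm : k - A.rank ≤ m - A.rank := hmn
    set tIdx : Fin (k - A.rank) := ⟨t, by omega⟩ with htIdx
    set d₁ : Fin (k - A.rank) → ℝ := fun j => if (j : ℕ) < t then 1 else 0 with hd₁
    set d₂ : Fin (k - A.rank) → ℝ := fun j => if j = tIdx then 1 else 0 with hd₂
    set N₁ := embd (m - A.rank) d₁ with hN₁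
    set N₂ := embd (m - A.rank) d₂ with hN₂
    set M₁ := P₂ * N₁ * Q₂ᵀ with hM₁
    set M₂ := P₂ * N₂ * Q₂ᵀ with hM₂
    have hproj : ∀ N : Matrix (Fin (m - A.rank)) (Fin (k - A.rank)) ℝ,
        P₂ᵀ * (P₂ * N * Q₂ᵀ) * Q₂ = N := by
      intro N
      simp only [← Matrix.mul_assoc]
      rw [hP, Matrix.one_mul, Matrix.mul_assoc, hQ, Matrix.mul_one]
    -- squared values
    have e₁ : ∀ j, d₁ j ^ 2 = if (j : ℕ) < t then 1 else 0 := by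
      intro j; rw [hd₁]; dsimp only; split <;> norm_num
    have e₂ : ∀ j, d₂ j ^ 2 = if (j : ℕ) = t then 1 else 0 := by
      intro j; rw [hd₂]; dsimp only
      by_cases h : j = tIdx
      · subst h; simp [htIdx]
      · have : (j : ℕ) ≠ t := by
          intro hc; exact h (Fin.ext hc)
        simp [h, this]
    have eAdd : ∀ j, (d₁ + d₂) j ^ 2 = if (j : ℕ) < t + 1 then 1 else 0 := by
      intro j
      simp only [Pi.add_apply]
      by_cases h : j = tIdx
      · subst h; rw [hd₁, hd₂]; simp [htIdx]
      · have hne : (j : ℕ) ≠ t := fun hc => h (Fin.ext hc)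
        rw [hd₁, hd₂]; dsimp only
        rw [if_neg h]
        by_cases h2 : (j : ℕ) < t
        · rw [if_pos h2, if_pos (by omega)]; norm_num
        · rw [if_neg h2, if_neg (by omega)]; norm_num
    have eSub : ∀ j, (d₁ - d₂) j ^ 2 = if (j : ℕ) < t + 1 then 1 else 0 := by
      intro j
      simp only [Pi.sub_apply]
      by_cases h : j = tIdx
      · subst h; rw [hd₁, hd₂]; simp [htIdx]
      · have hne : (j : ℕ) ≠ t := fun hc => h (Fin.ext hc)
        rw [hd₁, hd₂]; dsimp only
        rw [if_neg h]
        by_cases h2 : (j : ℕ) < t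
        · rw [if_pos h2, if_pos (by omega)]; norm_num
        · rw [if_neg h2, if_neg (by omega)]; norm_num
    -- phi values
    have hq₁ : phi t N₁ = 0 := by
      rw [hN₁, aux_phi_embd hkm t t d₁
        (fun j => by rw [e₁ j]; split <;> simp)
        (aux_sum_ind t (by omega) _ e₁)]
      simp
    have hq₂ : phi t N₂ = 0 := by
      rw [hN₂, aux_phi_embd hkm 1 t d₂
        (fun j => by rw [e₂ j]; split <;> simp)
        ?_]
      · rw [show (1 - t : ℕ) = 0 by omega]; simp
      · rw [show ∑ j, d₂ j ^ 2 = ∑ j, (if j = tIdx then (1:ℝ) else 0) by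
          refine Finset.sum_congr rfl fun j _ => ?_
          rw [e₂ j]
          by_cases h : j = tIdx
          · subst h; simp [htIdx]
          · rw [if_neg h, if_neg (fun hc => h (Fin.ext hc))]]
        rw [Finset.sum_ite_eq' Finset.univ tIdx (fun _ => (1:ℝ))]
        simp
    have hqAdd : phi t (embd (m - A.rank) (d₁ + d₂)) = 1 := by
      rw [aux_phi_embd hkm (t + 1) t (d₁ + d₂)
        (fun j => by rw [eAdd j]; split <;> simp)
        (aux_sum_ind (t + 1) (by omega) _ eAdd)]
      rw [show (t + 1 - t : ℕ) = 1 by omega]; simp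
    have hqSub : phi t (embd (m - A.rank) (d₁ - d₂)) = 1 := by
      rw [aux_phi_embd hkm (t + 1) t (d₁ - d₂)
        (fun j => by rw [eSub j]; split <;> simp)
        (aux_sum_ind (t + 1) (by omega) _ eSub)]
      rw [show (t + 1 - t : ℕ) = 1 by omega]; simp
    -- B values
    have b₁ : B M₁ M₁ = 0 := by rw [← hB M₁, hM₁, hproj, hq₁]
    have b₂ : B M₂ M₂ = 0 := by rw [← hB M₂, hM₂, hproj, hq₂]
    have bAdd : B (M₁ + M₂) (M₁ + M₂) = 1 := by
      have : P₂ᵀ * (M₁ + M₂) * Q₂ = embd (m - A.rank) (d₁ + d₂) := by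
        rw [embd_add, hM₁, hM₂, ← hN₁, ← hN₂]
        rw [show P₂ * N₁ * Q₂ᵀ + P₂ * N₂ * Q₂ᵀ = P₂ * (N₁ + N₂) * Q₂ᵀ by
          rw [Matrix.mul_add, Matrix.add_mul]]
        rw [hproj]
      rw [← hB (M₁ + M₂), this, hqAdd]
    have bSub : B (M₁ - M₂) (M₁ - M₂) = 1 := by
      have : P₂ᵀ * (M₁ - M₂) * Q₂ = embd (m - A.rank) (d₁ - d₂) := by
        rw [embd_sub, hM₁, hM₂, ← hN₁, ← hN₂]
        rw [show P₂ * N₁ * Q₂ᵀ - P₂ * N₂ * Q₂ᵀ = P₂ * (N₁ - N₂) * Q₂ᵀ by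
          rw [Matrix.mul_sub, Matrix.sub_mul]]
        rw [hproj]
      rw [← hB (M₁ - M₂), this, hqSub]
    simp only [map_add, map_sub, LinearMap.add_apply, LinearMap.sub_apply] at bAdd bSub
    linarith
end

section
/- Let Π₀ ∈ M^{m×k} have rank r₀, and let Π̂_n be random matrices with τ_n‖Π̂_n − Π₀‖ bounded in probability for some τ_n → ∞. Let κ_n > 0 satisfy κ_n → 0 and τ_n κ_n → ∞, and define r̂_n to be the largest j ∈ {1,…,k} with σ_j(Π̂_n) ≥ κ_n (and r̂_n = 0 if no such j exists). Then P(r̂_n = r₀) → 1. -/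
open Matrix Filter Topology

open Finset RealInnerProductSpace

namespace RankAux

variable {m k : ℕ}

lemma dot_eq_inner (x y : EuclideanSpace ℝ (Fin k)) :
    ⟪x, y⟫ = dotProduct (x : Fin k → ℝ) y := by
  simp [PiLp.inner_apply, dotProduct, RCLike.inner_apply, mul_comm]

/-- Rayleigh identity on the span of a set of eigenvectors. -/
lemma rayleigh_repr {S : Matrix (Fin k) (Fin k) ℝ} (hS : S.IsHermitian)
    (s : Finset (Fin k)) {x : EuclideanSpace ℝ (Fin k)}
    (hx : x ∈ Submodule.span ℝ (hS.eigenvectorBasis '' ↑s)) :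
    (∃ c : (↑s : Set (Fin k)) → ℝ,
      ⟪x, (WithLp.toLp 2 (S *ᵥ x) : EuclideanSpace ℝ (Fin k))⟫ = ∑ i : (↑s : Set (Fin k)), hS.eigenvalues i * (c i)^2 ∧
      ⟪x, x⟫ = ∑ i : (↑s : Set (Fin k)), (c i)^2) := by
  set B := hS.eigenvectorBasis with hB
  rw [Set.image_eq_range, Submodule.mem_span_range_iff_exists_fun] at hx
  obtain ⟨c, hc⟩ := hx
  have horth : Orthonormal ℝ (fun i : (↑s : Set (Fin k)) => B i) :=
    B.orthonormal.comp _ Subtype.val_injective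
  refine ⟨c, ?_, ?_⟩
  · have hSx : (WithLp.toLp 2 (S *ᵥ x) : EuclideanSpace ℝ (Fin k)) = ∑ i : (↑s : Set (Fin k)), (c i * hS.eigenvalues i) • B i := by
      have h0 : (WithLp.toLp 2 (S *ᵥ x) : EuclideanSpace ℝ (Fin k)) = Matrix.toEuclideanLin S x := rfl
      rw [h0, ← hc, map_sum]
      refine Finset.sum_congr rfl fun i _ => ?_
      rw [_root_.map_smul, Matrix.toEuclideanLin_apply]
      have hv : S *ᵥ (B ↑i) = hS.eigenvalues ↑i • ⇑(B ↑i) := hS.mulVec_eigenvectorBasis ↑i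
      rw [hv, WithLp.toLp_smul, WithLp.toLp_ofLp, smul_smul]
    rw [hSx, inner_sum]
    simp_rw [real_inner_smul_right]
    simp only [← hc]
    simp_rw [horth.inner_left_fintype, conj_trivial]
    exact Finset.sum_congr rfl fun i _ => by ring
  · simp only [← hc]
    rw [inner_sum]
    simp_rw [real_inner_smul_right, horth.inner_left_fintype, conj_trivial]
    exact Finset.sum_congr rfl fun i _ => by ring

lemma finrank_span_image_finset (B : OrthonormalBasis (Fin k) ℝ (EuclideanSpace ℝ (Fin k)))
    (s : Finset (Fin k)) :
    Module.finrank ℝ (Submodule.span ℝ (B '' ↑s)) = s.card := by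
  rw [Set.image_eq_range]
  have hli : LinearIndependent ℝ (fun i : (↑s : Set (Fin k)) => B i) :=
    B.orthonormal.linearIndependent.comp _ Subtype.val_injective
  rw [finrank_span_eq_card hli]
  simp

lemma exists_ne_zero_mem_inf {V W : Submodule ℝ (EuclideanSpace ℝ (Fin k))}
    (h : k < Module.finrank ℝ V + Module.finrank ℝ W) :
    ∃ x : EuclideanSpace ℝ (Fin k), x ≠ 0 ∧ x ∈ V ∧ x ∈ W := by
  have h1 := Submodule.finrank_sup_add_finrank_inf_eq V W
  have h2 : Module.finrank ℝ ↥(V ⊔ W) ≤ k := by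
    simpa [finrank_euclideanSpace] using Submodule.finrank_le (V ⊔ W)
  have h3 : 0 < Module.finrank ℝ ↥(V ⊓ W) := by omega
  have : Nontrivial ↥(V ⊓ W) := Module.nontrivial_of_finrank_pos h3
  obtain ⟨y, hy⟩ := exists_ne (0 : ↥(V ⊓ W))
  exact ⟨↑y, by simpa using hy, y.2.1, y.2.2⟩

lemma eig_nonneg (A : Matrix (Fin m) (Fin k) ℝ) (i : Fin k) :
    0 ≤ (transpose_mul_self_isHermitian A).eigenvalues i := by
  have h : (Aᵀ * A).PosSemidef := by
    have := Matrix.posSemidef_conjTranspose_mul_self A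
    rwa [Matrix.conjTranspose_eq_transpose_of_trivial] at this
  exact h.eigenvalues_nonneg i

lemma frobNormSq_eq_sum (A : Matrix (Fin m) (Fin k) ℝ) :
    frobNormSq A = ∑ i : Fin k, ∑ j : Fin m, A j i ^ 2 := by
  simp [frobNormSq, Matrix.trace, Matrix.diag, Matrix.mul_apply, Matrix.transpose_apply, sq]

lemma frobNormSq_nonneg (A : Matrix (Fin m) (Fin k) ℝ) : 0 ≤ frobNormSq A := by
  rw [frobNormSq_eq_sum]; positivity

lemma dot_mulVec_le (M : Matrix (Fin m) (Fin k) ℝ) (x : Fin k → ℝ) :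
    (M *ᵥ x) ⬝ᵥ (M *ᵥ x) ≤ frobNormSq M * (x ⬝ᵥ x) := by
  have h1 : ∀ j : Fin m, ((M *ᵥ x) j)^2 ≤ (∑ i : Fin k, M j i ^ 2) * (∑ i : Fin k, x i ^2) := by
    intro j
    simpa [Matrix.mulVec, dotProduct] using
      Finset.sum_mul_sq_le_sq_mul_sq Finset.univ (fun i => M j i) x
  have h2 : (M *ᵥ x) ⬝ᵥ (M *ᵥ x) = ∑ j : Fin m, ((M *ᵥ x) j)^2 := by
    simp [dotProduct, sq]
  have h3 : (x ⬝ᵥ x) = ∑ i : Fin k, x i ^2 := by simp [dotProduct, sq]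
  rw [h2, h3, frobNormSq_eq_sum, Finset.sum_comm, Finset.sum_mul]
  exact Finset.sum_le_sum fun j _ => h1 j

lemma dot_tmul (A : Matrix (Fin m) (Fin k) ℝ) (x : Fin k → ℝ) :
    x ⬝ᵥ ((Aᵀ * A) *ᵥ x) = (A *ᵥ x) ⬝ᵥ (A *ᵥ x) := by
  rw [← Matrix.mulVec_mulVec, Matrix.dotProduct_mulVec, Matrix.vecMul_transpose]

/-- Weyl's inequality for singular values with the Frobenius norm. -/
lemma sv_weyl (A B : Matrix (Fin m) (Fin k) ℝ) (j : Fin k) :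
    sv A j ≤ sv B j + frobNorm (A - B) := by
  classical
  set hA := transpose_mul_self_isHermitian A with hhA
  set hB := transpose_mul_self_isHermitian B with hhB
  set pA := Tuple.sort hA.eigenvalues with hpA
  set pB := Tuple.sort hB.eigenvalues with hpB
  set sA : Finset (Fin k) := Finset.image pA (Finset.Ici j.rev) with hsA
  set sB : Finset (Fin k) := Finset.image pB (Finset.Iic j.rev) with hsB
  have hcard : k < Module.finrank ℝ (Submodule.span ℝ (hA.eigenvectorBasis '' ↑sA))
      + Module.finrank ℝ (Submodule.span ℝ (hB.eigenvectorBasis '' ↑sB)) := by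
    rw [finrank_span_image_finset, finrank_span_image_finset, hsA, hsB,
      Finset.card_image_of_injective _ (Equiv.injective _),
      Finset.card_image_of_injective _ (Equiv.injective _), Fin.card_Ici, Fin.card_Iic]
    have h1 := j.rev.is_lt
    omega
  obtain ⟨x, hx0, hxA, hxB⟩ := exists_ne_zero_mem_inf hcard
  obtain ⟨cA, hA1, hA2⟩ := rayleigh_repr hA sA hxA
  obtain ⟨cB, hB1, hB2⟩ := rayleigh_repr hB sB hxB
  set tA := hA.eigenvalues (pA j.rev) with htAdef
  set tB := hB.eigenvalues (pB j.rev) with htBdef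
  have hgA : Monotone (hA.eigenvalues ∘ pA) := Tuple.monotone_sort _
  have hgB : Monotone (hB.eigenvalues ∘ pB) := Tuple.monotone_sort _
  -- Rayleigh bounds
  have hRA : tA * ⟪x, x⟫ ≤ ⟪x, (WithLp.toLp 2 ((Aᵀ * A) *ᵥ x) : EuclideanSpace ℝ (Fin k))⟫ := by
    rw [hA1, hA2, Finset.mul_sum]
    refine Finset.sum_le_sum fun i _ => ?_
    have hi : tA ≤ hA.eigenvalues ↑i := by
      obtain ⟨i', hi', hii⟩ := Finset.mem_image.mp (Finset.mem_coe.mp i.2)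
      rw [← hii]
      exact hgA (Finset.mem_Ici.mp hi')
    exact mul_le_mul_of_nonneg_right hi (sq_nonneg _)
  have hRB : ⟪x, (WithLp.toLp 2 ((Bᵀ * B) *ᵥ x) : EuclideanSpace ℝ (Fin k))⟫ ≤ tB * ⟪x, x⟫ := by
    rw [hB1, hB2, Finset.mul_sum]
    refine Finset.sum_le_sum fun i _ => ?_
    have hi : hB.eigenvalues ↑i ≤ tB := by
      obtain ⟨i', hi', hii⟩ := Finset.mem_image.mp (Finset.mem_coe.mp i.2)
      rw [← hii]
      exact hgB (Finset.mem_Iic.mp hi')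
    exact mul_le_mul_of_nonneg_right hi (sq_nonneg _)
  -- translate to norms
  set u : EuclideanSpace ℝ (Fin m) := WithLp.toLp 2 (A *ᵥ x : Fin m → ℝ) with hu
  set v : EuclideanSpace ℝ (Fin m) := WithLp.toLp 2 (B *ᵥ x : Fin m → ℝ) with hv
  have hxn : ⟪x, x⟫ = ‖x‖^2 := real_inner_self_eq_norm_sq x
  have hAid : ⟪x, (WithLp.toLp 2 ((Aᵀ * A) *ᵥ x) : EuclideanSpace ℝ (Fin k))⟫ = ⟪u, u⟫ := by
    rw [dot_eq_inner, dot_eq_inner]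
    exact dot_tmul A x
  have hBid : ⟪x, (WithLp.toLp 2 ((Bᵀ * B) *ᵥ x) : EuclideanSpace ℝ (Fin k))⟫ = ⟪v, v⟫ := by
    rw [dot_eq_inner, dot_eq_inner]
    exact dot_tmul B x
  have hupos : tA * ‖x‖^2 ≤ ‖u‖^2 := by
    rw [← hxn, ← real_inner_self_eq_norm_sq, ← hAid]
    exact hRA
  have hvle : ‖v‖^2 ≤ tB * ‖x‖^2 := by
    rw [← hxn, ← real_inner_self_eq_norm_sq, ← hBid]
    exact hRB
  have hw : ‖u - v‖ ≤ frobNorm (A - B) * ‖x‖ := by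
    have h1 : ((u - v : EuclideanSpace ℝ (Fin m)) : Fin m → ℝ) = (A - B) *ᵥ x := by
      rw [Matrix.sub_mulVec]
      rfl
    have h2 : ‖u - v‖^2 ≤ frobNormSq (A - B) * ‖x‖^2 := by
      calc ‖u - v‖^2 = ⟪u - v, u - v⟫ := (real_inner_self_eq_norm_sq _).symm
        _ = ((A - B) *ᵥ x) ⬝ᵥ ((A - B) *ᵥ x) := by rw [dot_eq_inner, h1]
        _ ≤ frobNormSq (A - B) * ((x : Fin k → ℝ) ⬝ᵥ (x : Fin k → ℝ)) := dot_mulVec_le (A - B) x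
        _ = frobNormSq (A - B) * ‖x‖^2 := by rw [← dot_eq_inner, hxn]
    calc ‖u - v‖ = Real.sqrt (‖u - v‖^2) := (Real.sqrt_sq (norm_nonneg _)).symm
      _ ≤ Real.sqrt (frobNormSq (A - B) * ‖x‖^2) := Real.sqrt_le_sqrt h2
      _ = frobNorm (A - B) * ‖x‖ := by
          rw [Real.sqrt_mul (frobNormSq_nonneg _), Real.sqrt_sq (norm_nonneg _)]
          rfl
  have hsvA : sv A j = Real.sqrt tA := rfl
  have hsvB : sv B j = Real.sqrt tB := rfl
  have hA3 : sv A j * ‖x‖ ≤ ‖u‖ := by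
    rw [hsvA]
    calc Real.sqrt tA * ‖x‖ = Real.sqrt (tA * ‖x‖^2) := by
          rw [Real.sqrt_mul (eig_nonneg A _), Real.sqrt_sq (norm_nonneg _)]
      _ ≤ Real.sqrt (‖u‖^2) := Real.sqrt_le_sqrt hupos
      _ = ‖u‖ := Real.sqrt_sq (norm_nonneg _)
  have hB3 : ‖v‖ ≤ sv B j * ‖x‖ := by
    rw [hsvB]
    calc ‖v‖ = Real.sqrt (‖v‖^2) := (Real.sqrt_sq (norm_nonneg _)).symm
      _ ≤ Real.sqrt (tB * ‖x‖^2) := Real.sqrt_le_sqrt hvle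
      _ = Real.sqrt tB * ‖x‖ := by
          rw [Real.sqrt_mul (eig_nonneg B _), Real.sqrt_sq (norm_nonneg _)]
  have htri : ‖u‖ ≤ ‖v‖ + ‖u - v‖ := by
    calc ‖u‖ = ‖v + (u - v)‖ := by rw [add_sub_cancel]
      _ ≤ ‖v‖ + ‖u - v‖ := norm_add_le _ _
  have hxpos : 0 < ‖x‖ := norm_pos_iff.mpr hx0
  have : sv A j * ‖x‖ ≤ (sv B j + frobNorm (A - B)) * ‖x‖ := by
    calc sv A j * ‖x‖ ≤ ‖u‖ := hA3
      _ ≤ ‖v‖ + ‖u - v‖ := htri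
      _ ≤ sv B j * ‖x‖ + frobNorm (A - B) * ‖x‖ := add_le_add hB3 hw
      _ = (sv B j + frobNorm (A - B)) * ‖x‖ := by ring
  exact le_of_mul_le_mul_right (by linarith) hxpos


/-- The sorted eigenvalue function of `AᵀA`. -/
noncomputable def gval (A : Matrix (Fin m) (Fin k) ℝ) (i : Fin k) : ℝ :=
  (transpose_mul_self_isHermitian A).eigenvalues
    (Tuple.sort ((transpose_mul_self_isHermitian A).eigenvalues) i)

lemma sv_eq_sqrt_gval (A : Matrix (Fin m) (Fin k) ℝ) (j : Fin k) :
    sv A j = Real.sqrt (gval A j.rev) := rfl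

lemma gval_monotone (A : Matrix (Fin m) (Fin k) ℝ) : Monotone (gval A) :=
  Tuple.monotone_sort _

lemma gval_nonneg (A : Matrix (Fin m) (Fin k) ℝ) (i : Fin k) : 0 ≤ gval A i :=
  eig_nonneg A _

lemma sv_antitone (A : Matrix (Fin m) (Fin k) ℝ) : Antitone (sv A) := by
  intro j j' h
  rw [sv_eq_sqrt_gval, sv_eq_sqrt_gval]
  exact Real.sqrt_le_sqrt (gval_monotone A (Fin.rev_le_rev.mpr h))

lemma card_gval_ne_zero (A : Matrix (Fin m) (Fin k) ℝ) :
    (Finset.univ.filter fun i : Fin k => gval A i ≠ 0).card = A.rank := by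
  classical
  have h1 : (Aᵀ * A).rank = A.rank := Matrix.rank_transpose_mul_self A
  have h2 := (transpose_mul_self_isHermitian A).rank_eq_card_non_zero_eigs
  rw [Fintype.card_subtype] at h2
  rw [← h1, h2]
  apply Finset.card_bij (fun i _ => Tuple.sort ((transpose_mul_self_isHermitian A).eigenvalues) i)
  · intro a ha
    simp only [Finset.mem_filter, Finset.mem_univ, true_and] at ha ⊢
    exact ha
  · intro a _ b _ hab
    exact (Equiv.injective _) hab
  · intro b hb
    simp only [Finset.mem_filter, Finset.mem_univ, true_and] at hb ⊢
    refine ⟨(Tuple.sort ((transpose_mul_self_isHermitian A).eigenvalues)).symm b, ?_, by simp⟩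
    simpa [gval] using hb

lemma gval_pos (A : Matrix (Fin m) (Fin k) ℝ) (i : Fin k) (hi : k - A.rank ≤ (i : ℕ)) :
    0 < gval A i := by
  classical
  rcases lt_or_ge 0 (gval A i) with h | h
  · exact h
  exfalso
  have hz : gval A i = 0 := le_antisymm h (gval_nonneg A i)
  have hsub : (Finset.univ.filter fun j : Fin k => gval A j ≠ 0) ⊆ Finset.Ioi i := by
    intro j hj
    simp only [Finset.mem_filter, Finset.mem_univ, true_and] at hj
    rw [Finset.mem_Ioi]
    by_contra hc
    push_neg at hc
    exact hj (le_antisymm (hz ▸ gval_monotone A hc) (gval_nonneg A j))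
  have hcard := Finset.card_le_card hsub
  rw [card_gval_ne_zero, Fin.card_Ioi] at hcard
  have := i.is_lt
  omega

lemma gval_zero (A : Matrix (Fin m) (Fin k) ℝ) (i : Fin k) (hi : (i : ℕ) < k - A.rank) :
    gval A i = 0 := by
  classical
  by_contra hc
  have hsub : Finset.Ici i ⊆ (Finset.univ.filter fun j : Fin k => gval A j ≠ 0) := by
    intro j hj
    rw [Finset.mem_Ici] at hj
    simp only [Finset.mem_filter, Finset.mem_univ, true_and]
    have h0 : 0 < gval A i := lt_of_le_of_ne (gval_nonneg A i) (Ne.symm hc)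
    exact ne_of_gt (lt_of_lt_of_le h0 (gval_monotone A hj))
  have hcard := Finset.card_le_card hsub
  rw [card_gval_ne_zero, Fin.card_Ici] at hcard
  have := i.is_lt
  omega

lemma sv_zero_of_rank_le (A : Matrix (Fin m) (Fin k) ℝ) (j : Fin k) (hj : A.rank ≤ (j : ℕ)) :
    sv A j = 0 := by
  rw [sv_eq_sqrt_gval, gval_zero, Real.sqrt_zero]
  rw [Fin.val_rev]
  have := j.is_lt
  omega

lemma sv_rank_pos (A : Matrix (Fin m) (Fin k) ℝ) (h1 : 1 ≤ A.rank) (hj : A.rank - 1 < k) :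
    0 < sv A ⟨A.rank - 1, hj⟩ := by
  have hrk : A.rank ≤ k := Matrix.rank_le_width A
  rw [sv_eq_sqrt_gval]
  refine Real.sqrt_pos.mpr (gval_pos A _ ?_)
  rw [Fin.val_rev]
  simp only [Fin.val_mk]
  omega

end RankAux


open MeasureTheory

/-- `rhat κ A` is the largest `j ∈ {1,…,k}` with `σ_j(A) ≥ κ`, and `0` if there is none. -/
noncomputable def rhat {m k : ℕ} (κ : ℝ) (A : Matrix (Fin m) (Fin k) ℝ) : ℕ :=
  sSup {j : ℕ | ∃ hj : j - 1 < k, 1 ≤ j ∧ κ ≤ sv A ⟨j - 1, hj⟩}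


namespace RankAux

lemma frobNorm_sub_comm (A B : Matrix (Fin m) (Fin k) ℝ) :
    frobNorm (A - B) = frobNorm (B - A) := by
  unfold frobNorm
  congr 1
  rw [frobNormSq_eq_sum, frobNormSq_eq_sum]
  refine Finset.sum_congr rfl fun i _ => Finset.sum_congr rfl fun j _ => ?_
  simp only [Matrix.sub_apply]
  ring

lemma frobNorm_nonneg (A : Matrix (Fin m) (Fin k) ℝ) : 0 ≤ frobNorm A :=
  Real.sqrt_nonneg _

lemma rhat_eq_rank (A₀ Ah : Matrix (Fin m) (Fin k) ℝ) (κ : ℝ) (hκ : 0 < κ)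
    (h1 : frobNorm (Ah - A₀) < κ)
    (h2 : ∀ hj : A₀.rank - 1 < k, 1 ≤ A₀.rank →
      κ + frobNorm (Ah - A₀) ≤ sv A₀ ⟨A₀.rank - 1, hj⟩) :
    rhat κ Ah = A₀.rank := by
  classical
  set r := A₀.rank with hr
  set S := {j : ℕ | ∃ hj : j - 1 < k, 1 ≤ j ∧ κ ≤ sv Ah ⟨j - 1, hj⟩} with hS
  have hrhat : rhat κ Ah = sSup S := rfl
  have hub : ∀ j ∈ S, j ≤ r := by
    intro j hj
    obtain ⟨hjk, hj1, hjκ⟩ := hj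
    by_contra hc
    push_neg at hc
    have hrle : r ≤ ((⟨j - 1, hjk⟩ : Fin k) : ℕ) := by
      simp only [Fin.val_mk]; omega
    have hw := sv_weyl Ah A₀ ⟨j - 1, hjk⟩
    rw [sv_zero_of_rank_le A₀ _ hrle, zero_add] at hw
    linarith
  rcases Nat.eq_zero_or_pos r with h0 | hpos
  · have hempty : S = ∅ := by
      rw [Set.eq_empty_iff_forall_notMem]
      intro j hj
      have := hub j hj
      obtain ⟨_, hj1, _⟩ := hj
      omega
    rw [hrhat, hempty, h0]
    exact csSup_empty
  · have hrk : r ≤ k := Matrix.rank_le_width A₀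
    have hjk : r - 1 < k := by omega
    have hrS : r ∈ S := by
      refine ⟨hjk, hpos, ?_⟩
      have hw := sv_weyl A₀ Ah ⟨r - 1, hjk⟩
      rw [frobNorm_sub_comm A₀ Ah] at hw
      have := h2 hjk hpos
      linarith
    rw [hrhat]
    exact le_antisymm (csSup_le ⟨r, hrS⟩ hub) (le_csSup ⟨r, hub⟩ hrS)

end RankAux

/-- consistency of the thresholded rank estimator. -/
theorem rank_estimator_consistent {m k : ℕ} {Ω : Type*} [MeasurableSpace Ω]
    (μ : Measure Ω) [IsProbabilityMeasure μ]
    (A₀ : Matrix (Fin m) (Fin k) ℝ) (Ahat : ℕ → Ω → Matrix (Fin m) (Fin k) ℝ)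
    (hmeas : ∀ n i j, Measurable fun ω => Ahat n ω i j)
    (τ : ℕ → ℝ) (hτ : Tendsto τ atTop atTop)
    (hOp : ∀ ε > (0 : ℝ), ∃ C : ℝ, ∀ᶠ n in atTop,
      μ {ω | C < τ n * frobNorm (Ahat n ω - A₀)} ≤ ENNReal.ofReal ε)
    (κ : ℕ → ℝ) (hκpos : ∀ n, 0 < κ n) (hκ0 : Tendsto κ atTop (nhds 0))
    (hτκ : Tendsto (fun n => τ n * κ n) atTop atTop) :
    Tendsto (fun n => μ {ω | rhat (κ n) (Ahat n ω) = A₀.rank}) atTop (nhds 1) := by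
  classical
  set r := A₀.rank with hr
  have hrk : r ≤ k := Matrix.rank_le_width A₀
  obtain ⟨δ, hδpos, hδ⟩ : ∃ δ : ℝ, 0 < δ ∧
      ∀ (hj : r - 1 < k), 1 ≤ r → δ = sv A₀ ⟨r - 1, hj⟩ := by
    by_cases h1 : 1 ≤ r
    · have hj : r - 1 < k := by omega
      exact ⟨sv A₀ ⟨r - 1, hj⟩, RankAux.sv_rank_pos A₀ h1 hj, fun _ _ => rfl⟩
    · exact ⟨1, one_pos, fun _ h => absurd h h1⟩
  -- key eventual bound on the bad event
  have key : ∀ ε : ℝ, 0 < ε → ∀ᶠ n in atTop,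
      μ {ω | rhat (κ n) (Ahat n ω) ≠ r} ≤ ENNReal.ofReal ε := by
    intro ε hε
    obtain ⟨C, hC⟩ := hOp ε hε
    have E1 : ∀ᶠ n in atTop, C < τ n * κ n := hτκ.eventually_gt_atTop C
    have E2 : ∀ᶠ n in atTop, 0 < τ n := hτ.eventually_gt_atTop 0
    have E3 : ∀ᶠ n in atTop, κ n < δ / 2 :=
      hκ0.eventually (gt_mem_nhds (half_pos hδpos))
    have E4 : ∀ᶠ n in atTop, 2 * C / δ ≤ τ n := hτ.eventually_ge_atTop _
    filter_upwards [hC, E1, E2, E3, E4] with n hCn h1 h2 h3 h4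
    refine le_trans (measure_mono ?_) hCn
    intro ω hω
    simp only [Set.mem_setOf_eq] at hω ⊢
    by_contra hcon
    push_neg at hcon
    set F := frobNorm (Ahat n ω - A₀) with hF
    have hF0 : 0 ≤ F := RankAux.frobNorm_nonneg _
    have hFκ : F < κ n := by
      have := lt_of_le_of_lt hcon h1
      exact lt_of_mul_lt_mul_left this (le_of_lt h2)
    have hFδ : F ≤ δ / 2 := by
      have hC2 : C ≤ τ n * (δ / 2) := by
        have := mul_le_mul_of_nonneg_right h4 (le_of_lt (half_pos hδpos))
        calc C = 2 * C / δ * (δ / 2) := by field_simp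
          _ ≤ τ n * (δ / 2) := this
      exact le_of_mul_le_mul_left (hcon.trans hC2) h2
    apply hω
    refine RankAux.rhat_eq_rank A₀ (Ahat n ω) (κ n) (hκpos n) hFκ ?_
    intro hj hr1
    rw [← hδ hj hr1]
    linarith
  -- conclude
  rw [ENNReal.tendsto_nhds (by norm_num : (1 : ENNReal) ≠ ⊤)]
  intro ε hε
  set e : ENNReal := min ε 1 with he
  have hepos : 0 < e := lt_min hε zero_lt_one
  have hene : e ≠ ⊤ := ne_top_of_le_ne_top (by norm_num) (min_le_right _ _)
  have hetop : ENNReal.ofReal e.toReal = e := ENNReal.ofReal_toReal hene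
  have heR : 0 < e.toReal := ENNReal.toReal_pos (ne_of_gt hepos) hene
  filter_upwards [key e.toReal heR] with n hn
  have hbad : μ {ω | rhat (κ n) (Ahat n ω) ≠ r} ≤ ε := by
    rw [hetop] at hn
    exact hn.trans (min_le_left _ _)
  constructor
  · have hsum : (1 : ENNReal) ≤ μ {ω | rhat (κ n) (Ahat n ω) = r}
        + μ {ω | rhat (κ n) (Ahat n ω) ≠ r} := by
      have hcup : {ω | rhat (κ n) (Ahat n ω) = r} ∪ {ω | rhat (κ n) (Ahat n ω) ≠ r}
          = Set.univ := by
        ext ω; by_cases h : rhat (κ n) (Ahat n ω) = r <;> simp [h]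
      calc (1 : ENNReal) = μ Set.univ := (measure_univ).symm
        _ = μ ({ω | rhat (κ n) (Ahat n ω) = r} ∪ {ω | rhat (κ n) (Ahat n ω) ≠ r}) := by
            rw [hcup]
        _ ≤ _ := measure_union_le _ _
    calc 1 - ε ≤ 1 - μ {ω | rhat (κ n) (Ahat n ω) ≠ r} := tsub_le_tsub_left hbad 1
      _ ≤ μ {ω | rhat (κ n) (Ahat n ω) = r} := by
          rw [tsub_le_iff_right]
          calc (1 : ENNReal) ≤ _ := hsum
            _ = _ := by rw [add_comm]
  · exact le_trans prob_le_one (le_add_right (le_refl 1))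
end
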